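/- arXiv:2406.07905 — 2 statements merged into one kernel-verified Lean document; each statement's English description precedes it below -/
import Mathlib

section
/- Let k be a non-negative integer and n a positive integer. For each 1 ≤ i ≤ k+1 let pᵢ be a prime with pᵢ ≡ 3 (mod 4). Then for any integer j with j ≢ 0 (mod p_{k+1}), one has B₄( p₁²p₂²⋯p_k² p_{k+1}² n + (p₁²p₂²⋯p_k² p_{k+1}(4j + p_{k+1}) − 1)/4 ) ≡ 0 (mod 4). (Note that since each pᵢ ≡ 3 (mod 4), the quantity p₁²p₂²⋯p_k² p_{k+1}(4j + p_{k+1}) − 1 is divisible by 4.) -/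
/-- Number of `l`-regular partitions of `n`: partitions none of whose parts is
divisible by `l`. -/
def numRegularPartitions (l n : ℕ) : ℕ :=
  (Finset.univ.filter (fun p : Nat.Partition n => ∀ x ∈ p.parts, ¬ l ∣ x)).card

/-- `B l n`: the number of `l`-regular bipartitions of `n`, i.e. ordered pairs
`(λ, μ)` of `l`-regular partitions the sum of whose parts equals `n`. -/
def B (l n : ℕ) : ℕ :=
  ∑ ab ∈ Finset.HasAntidiagonal.antidiagonal n,
    numRegularPartitions l ab.1 * numRegularPartitions l ab.2

open PowerSeries

noncomputable section

namespace Aux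

variable {α : Type*}

open Finset

open scoped Classical

/-- A convenience constructor for the power series whose coefficients indicate a subset. -/
def indicatorSeries (α : Type*) [Semiring α] (s : Set ℕ) : PowerSeries α :=
  PowerSeries.mk fun n => if n ∈ s then 1 else 0

theorem coeff_indicator (s : Set ℕ) [Semiring α] (n : ℕ) :
    coeff n (indicatorSeries α s) = if n ∈ s then 1 else 0 :=
  coeff_mk _ _

theorem coeff_indicator_pos (s : Set ℕ) [Semiring α] (n : ℕ) (h : n ∈ s) :
    coeff n (indicatorSeries α s) = 1 := by rw [coeff_indicator, if_pos h]

theorem coeff_indicator_neg (s : Set ℕ) [Semiring α] (n : ℕ) (h : n ∉ s) :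
    coeff n (indicatorSeries α s) = 0 := by rw [coeff_indicator, if_neg h]

theorem constantCoeff_indicator (s : Set ℕ) [Semiring α] :
    constantCoeff (indicatorSeries α s) = if 0 ∈ s then 1 else 0 :=
  rfl

theorem two_series (i : ℕ) [Semiring α] :
    1 + (X : PowerSeries α) ^ i.succ = indicatorSeries α {0, i.succ} := by
  ext n
  simp only [coeff_indicator, coeff_one, coeff_X_pow, Set.mem_insert_iff, Set.mem_singleton_iff,
    map_add]
  cases' n with d
  · simp [(Nat.succ_ne_zero i).symm]
  · simp [Nat.succ_ne_zero d]

theorem num_series' [Field α] (i : ℕ) :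
    (1 - (X : PowerSeries α) ^ (i + 1))⁻¹ = indicatorSeries α {k | i + 1 ∣ k} := by
  rw [PowerSeries.inv_eq_iff_mul_eq_one]
  · ext n
    cases n with
    | zero => simp [mul_sub, zero_pow, constantCoeff_indicator]
    | succ n =>
      simp only [coeff_one, if_false, mul_sub, mul_one, coeff_indicator,
        LinearMap.map_sub, reduceCtorEq]
      simp_rw [coeff_mul, coeff_X_pow, coeff_indicator, @boole_mul _ _ _ _]
      erw [@sum_ite _ _ _ _ _ (fun _ => Classical.propDecidable _), sum_ite]
      simp_rw [@filter_filter _ _ _ _ _, sum_const_zero, add_zero, sum_const, nsmul_eq_mul, mul_one,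
        sub_eq_iff_eq_add, zero_add]
      symm
      split_ifs with h
      · suffices #{a ∈ antidiagonal (n + 1) | i + 1 ∣ a.fst ∧ a.snd = i + 1} = 1 by
          simp only [Set.mem_setOf_eq]; convert congr_arg ((↑) : ℕ → α) this; norm_cast
        rw [card_eq_one]
        cases' h with p hp
        refine ⟨((i + 1) * (p - 1), i + 1), ?_⟩
        ext ⟨a₁, a₂⟩
        simp only [mem_filter, Prod.mk.injEq, HasAntidiagonal.mem_antidiagonal, mem_singleton]
        constructor
        · rintro ⟨a_left, ⟨a, rfl⟩, rfl⟩
          refine ⟨?_, rfl⟩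
          rw [Nat.mul_sub_left_distrib, ← hp, ← a_left, mul_one, Nat.add_sub_cancel]
        · rintro ⟨rfl, rfl⟩
          match p with
          | 0 => rw [mul_zero] at hp; cases hp
          | p + 1 => rw [hp]; simp [mul_add]
      · suffices #{a ∈ antidiagonal (n + 1) | i + 1 ∣ a.fst ∧ a.snd = i + 1} = 0 by
          simp only [Set.mem_setOf_eq]; convert congr_arg ((↑) : ℕ → α) this; norm_cast
        rw [card_eq_zero]
        apply eq_empty_of_forall_notMem
        simp only [Prod.forall, mem_filter, not_and, HasAntidiagonal.mem_antidiagonal]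
        rintro _ h₁ h₂ ⟨a, rfl⟩ rfl
        apply h
        simp [← h₂]
  · simp [zero_pow]

-- The main workhorse of the partition theorem proof.
theorem partialGF_prop (α : Type*) [CommSemiring α] (n : ℕ) (s : Finset ℕ) (hs : ∀ i ∈ s, 0 < i)
    (c : ℕ → Set ℕ) (hc : ∀ i, i ∉ s → 0 ∈ c i) :
    #{p : n.Partition | (∀ j, p.parts.count j ∈ c j) ∧ ∀ j ∈ p.parts, j ∈ s} =
      coeff n (∏ i ∈ s, indicatorSeries α ((· * i) '' c i)) := by
  simp_rw [coeff_prod, coeff_indicator, prod_boole, sum_boole]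
  apply congr_arg
  simp only [mem_univ, forall_true_left, not_and, not_forall, exists_prop,
    Set.mem_image, not_exists]
  set φ : (a : Nat.Partition n) →
    a ∈ filter (fun p ↦ (∀ (j : ℕ), Multiset.count j p.parts ∈ c j) ∧ ∀ j ∈ p.parts, j ∈ s) univ →
    ℕ →₀ ℕ := fun p _ => {
      toFun := fun i => Multiset.count i p.parts • i
      support := Finset.filter (fun i => i ≠ 0) p.parts.toFinset
      mem_support_toFun := fun a => by
        simp only [smul_eq_mul, ne_eq, mul_eq_zero, Multiset.count_eq_zero]
        rw [not_or, not_not]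
        simp only [Multiset.mem_toFinset, not_not, mem_filter] }
  refine Finset.card_bij φ ?_ ?_ ?_
  · intro a ha
    simp only [φ, not_forall, not_exists, not_and, exists_prop, mem_filter]
    rw [mem_finsuppAntidiag]
    dsimp only [ne_eq, smul_eq_mul, id_eq, eq_mpr_eq_cast, le_eq_subset, Finsupp.coe_mk]
    simp only [mem_univ, forall_true_left, not_and, not_forall, exists_prop,
      mem_filter, true_and] at ha
    refine ⟨⟨?_, fun i ↦ ?_⟩, fun i _ ↦ ⟨a.parts.count i, ha.1 i, rfl⟩⟩
    · conv_rhs => simp [← a.parts_sum]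
      rw [sum_multiset_count_of_subset _ s]
      · simp only [smul_eq_mul]
      · intro i
        simp only [Multiset.mem_toFinset, not_not, mem_filter]
        apply ha.2
    · simp only [ne_eq, Multiset.mem_toFinset, not_not, mem_filter, and_imp]
      exact fun hi _ ↦ ha.2 i hi
  · skip
    intro p₁ hp₁ p₂ hp₂ h
    apply Nat.Partition.ext
    simp only [true_and, mem_univ, mem_filter] at hp₁ hp₂
    ext i
    simp only [φ, ne_eq, Multiset.mem_toFinset, not_not, smul_eq_mul, Finsupp.mk.injEq] at h
    by_cases hi : i = 0
    · rw [hi]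
      rw [Multiset.count_eq_zero_of_notMem]
      · rw [Multiset.count_eq_zero_of_notMem]
        intro a; exact Nat.lt_irrefl 0 (hs 0 (hp₂.2 0 a))
      intro a; exact Nat.lt_irrefl 0 (hs 0 (hp₁.2 0 a))
    · rw [← mul_left_inj' hi]
      rw [funext_iff] at h
      exact h.2 i
  · simp only [φ, mem_filter, mem_finsuppAntidiag, mem_univ, exists_prop, true_and, and_assoc]
    rintro f ⟨hf, hf₃, hf₄⟩
    have hf' : f ∈ finsuppAntidiag s n := mem_finsuppAntidiag.mpr ⟨hf, hf₃⟩
    simp only [mem_finsuppAntidiag] at hf'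
    refine ⟨⟨∑ i ∈ s, Multiset.replicate (f i / i) i, ?_, ?_⟩, ?_, ?_, ?_⟩
    · intro i hi
      simp only [exists_prop, Multiset.mem_sum, mem_map, Function.Embedding.coeFn_mk] at hi
      rcases hi with ⟨t, ht, z⟩
      apply hs
      rwa [Multiset.eq_of_mem_replicate z]
    · simp_rw [Multiset.sum_sum, Multiset.sum_replicate, Nat.nsmul_eq_mul]
      rw [← hf'.1]
      refine sum_congr rfl fun i hi => Nat.div_mul_cancel ?_
      rcases hf₄ i hi with ⟨w, _, hw₂⟩
      rw [← hw₂]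
      exact dvd_mul_left _ _
    · intro i
      simp_rw [Multiset.count_sum', Multiset.count_replicate, sum_ite_eq']
      split_ifs with h
      · rcases hf₄ i h with ⟨w, hw₁, hw₂⟩
        rwa [← hw₂, Nat.mul_div_cancel _ (hs i h)]
      · exact hc _ h
    · intro i hi
      rw [Multiset.mem_sum] at hi
      rcases hi with ⟨j, hj₁, hj₂⟩
      rwa [Multiset.eq_of_mem_replicate hj₂]
    · ext i
      simp_rw [Multiset.count_sum', Multiset.count_replicate, sum_ite_eq']
      simp only [ne_eq, Multiset.mem_toFinset, not_not, smul_eq_mul, ite_mul,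
        zero_mul, Finsupp.coe_mk]
      split_ifs with h
      · apply Nat.div_mul_cancel
        rcases hf₄ i h with ⟨w, _, hw₂⟩
        apply Dvd.intro_left _ hw₂
      · apply symm
        rw [← Finsupp.notMem_support_iff]
        exact notMem_mono hf'.2 h

end Aux
namespace Aux
open PowerSeries Finset
open scoped Classical
noncomputable section
variable {α : Type*}

def pCount (n : ℕ) : ℕ := Fintype.card (Nat.Partition n)

def dCount (n : ℕ) : ℕ := #(Nat.Partition.distincts n)

theorem parts_le {n : ℕ} (p : Nat.Partition n) {j : ℕ} (hj : j ∈ p.parts) : j ≤ n := by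
  simpa [p.parts_sum] using Multiset.single_le_sum (fun _ _ => Nat.zero_le _) _ hj

theorem mul_image_univ (i : ℕ) : ((· * i) '' Set.univ) = {k : ℕ | i ∣ k} := by
  ext k
  simp only [Set.image_univ, Set.mem_range, Set.mem_setOf_eq]
  exact ⟨fun ⟨a, ha⟩ => Dvd.intro_left a ha, fun ⟨a, ha⟩ => ⟨a, by rw [ha, mul_comm]⟩⟩

theorem num_series'' [Field α] {i : ℕ} (hi : 0 < i) :
    (1 - (X : PowerSeries α) ^ i)⁻¹ = indicatorSeries α {k | i ∣ k} := by
  obtain ⟨j, rfl⟩ := Nat.exists_eq_add_of_lt hi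
  rw [zero_add]
  exact num_series' j

/-- number of partitions of `n` with all parts in `s` -/
theorem countPartsIn [Field α] (n : ℕ) (s : Finset ℕ) (hs : ∀ i ∈ s, 0 < i) :
    (#{p : n.Partition | ∀ j ∈ p.parts, j ∈ s} : α) =
      coeff n (∏ i ∈ s, (1 - (X : PowerSeries α) ^ i)⁻¹) := by
  have key := partialGF_prop α n s hs (fun _ => Set.univ) (fun _ _ => trivial)
  have : (Finset.univ.filter fun p : n.Partition =>
      (∀ j, p.parts.count j ∈ (Set.univ : Set ℕ)) ∧ ∀ j ∈ p.parts, j ∈ s) =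
      (Finset.univ.filter fun p : n.Partition => ∀ j ∈ p.parts, j ∈ s) :=
    Finset.filter_congr fun p _ => by simp
  rw [this] at key
  rw [key]
  congr 1
  apply Finset.prod_congr rfl
  intro i hi
  rw [num_series'' (hs i hi), mul_image_univ]

theorem countDistinctPartsIn [Field α] (n : ℕ) (s : Finset ℕ) (hs : ∀ i ∈ s, 0 < i) :
    (#{p : n.Partition | p.parts.Nodup ∧ ∀ j ∈ p.parts, j ∈ s} : α) =
      coeff n (∏ i ∈ s, (1 + (X : PowerSeries α) ^ i)) := by
  have key := partialGF_prop α n s hs (fun _ => {0, 1}) (fun _ _ => Or.inl rfl)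
  have : (Finset.univ.filter fun p : n.Partition =>
      (∀ j, p.parts.count j ∈ ({0, 1} : Set ℕ)) ∧ ∀ j ∈ p.parts, j ∈ s) =
      (Finset.univ.filter fun p : n.Partition => p.parts.Nodup ∧ ∀ j ∈ p.parts, j ∈ s) :=
    Finset.filter_congr fun p _ => by
      constructor
      · rintro ⟨h1, h2⟩
        refine ⟨Multiset.nodup_iff_count_le_one.2 fun i => ?_, h2⟩
        have := h1 i
        simp only [Set.mem_insert_iff, Set.mem_singleton_iff] at this
        omega
      · rintro ⟨h1, h2⟩
        refine ⟨fun i => ?_, h2⟩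
        have := Multiset.nodup_iff_count_le_one.1 h1 i
        simp only [Set.mem_insert_iff, Set.mem_singleton_iff]
        omega
  rw [this] at key
  rw [key]
  congr 1
  apply Finset.prod_congr rfl
  intro i hi
  obtain ⟨i', rfl⟩ := Nat.exists_eq_add_of_lt (hs i hi)
  have himg : ((· * (0 + i' + 1)) '' ({0, 1} : Set ℕ)) = {0, Nat.succ i'} := by
    ext k
    simp only [Set.mem_image, Set.mem_insert_iff, Set.mem_singleton_iff]
    constructor
    · rintro ⟨a, (rfl | rfl), rfl⟩ <;> simp
    · rintro (rfl | rfl)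
      exacts [⟨0, Or.inl rfl, by simp⟩, ⟨1, Or.inr rfl, by simp⟩]
  rw [himg, ← two_series]
  norm_num

/-- allowed parts for 4-regular partitions -/
def S4 (N : ℕ) : Finset ℕ := (range (N + 1)).filter fun i => 0 < i ∧ ¬ 4 ∣ i

def S1 (N : ℕ) : Finset ℕ := (range (N + 1)).filter fun i => 0 < i

theorem S4_pos {N i : ℕ} (hi : i ∈ S4 N) : 0 < i := by simp [S4] at hi; omega

theorem S1_pos {N i : ℕ} (hi : i ∈ S1 N) : 0 < i := by simp [S1] at hi; omega

theorem b4_coeff [Field α] {n N : ℕ} (h : n ≤ N) :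
    (numRegularPartitions 4 n : α) =
      coeff n (∏ i ∈ S4 N, (1 - (X : PowerSeries α) ^ i)⁻¹) := by
  rw [← countPartsIn n (S4 N) (fun i hi => S4_pos hi)]
  refine congrArg (fun m : ℕ => (m : α)) ?_
  unfold numRegularPartitions
  refine congr_arg Finset.card (Finset.ext fun p => ?_)
  simp only [Finset.mem_filter, Finset.mem_univ, true_and]
  constructor
  · intro hp j hj
    have h1 := p.parts_pos hj
    have h2 := parts_le p hj
    simp only [S4, mem_filter, mem_range]
    exact ⟨by omega, h1, hp j hj⟩
  · intro hp x hx
    have := hp x hx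
    simp only [S4, mem_filter] at this
    exact this.2.2

theorem pCount_coeff [Field α] {n N : ℕ} (h : n ≤ N) :
    (pCount n : α) = coeff n (∏ i ∈ S1 N, (1 - (X : PowerSeries α) ^ i)⁻¹) := by
  rw [← countPartsIn n (S1 N) (fun i hi => S1_pos hi)]
  refine congrArg (fun m : ℕ => (m : α)) ?_
  unfold pCount
  rw [← Finset.card_univ]
  refine congr_arg Finset.card (Finset.ext fun p => ?_)
  constructor
  · intro _
    rw [Finset.mem_filter]
    refine ⟨Finset.mem_univ p, fun j hj => ?_⟩
    have h1 := p.parts_pos hj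
    have h2 := parts_le p hj
    simp only [S1, mem_filter, mem_range]
    omega
  · intro _
    exact Finset.mem_univ p

theorem dCount_coeff [Field α] {n N : ℕ} (h : n ≤ N) :
    (dCount n : α) = coeff n (∏ i ∈ S1 N, (1 + (X : PowerSeries α) ^ i)) := by
  rw [← countDistinctPartsIn n (S1 N) (fun i hi => S1_pos hi)]
  refine congrArg (fun m : ℕ => (m : α)) ?_
  unfold dCount
  rw [Nat.Partition.distincts]
  refine congr_arg Finset.card (Finset.ext fun p => ?_)
  simp only [Finset.mem_filter, Finset.mem_univ, true_and]
  constructor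
  · intro hp
    refine ⟨hp, fun j hj => ?_⟩
    have h1 := p.parts_pos hj
    have h2 := parts_le p hj
    simp only [S1, mem_filter, mem_range]
    omega
  · exact fun hp => hp.1

end
end Aux
namespace Aux
open PowerSeries Finset
open scoped Classical
noncomputable section

/-- triangle number `T k = 0 + 1 + ... + (k-1)` -/
def T (k : ℕ) : ℕ := ∑ i ∈ range k, i

theorem T_succ (k : ℕ) : T (k + 1) = T k + k := by simp [T, Finset.sum_range_succ]

theorem T_add (a b : ℕ) : T (a + b) = T a + T b + a * b := by
  induction b with
  | zero => simp [T]
  | succ b ih =>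
    rw [← add_assoc, T_succ, T_succ, ih, Nat.mul_succ]
    ring

theorem T_ge (k : ℕ) : k ≤ T (k + 1) := by
  induction k with
  | zero => simp
  | succ k ih => rw [T_succ]; omega

theorem T_strictMono : StrictMono (fun j => T (j + 1)) := by
  apply strictMono_nat_of_lt_succ
  intro n
  simp only [T_succ]
  omega

/-- Gaussian binomial coefficient as a power series (a polynomial in fact) over ℚ. -/
def gb : ℕ → ℕ → PowerSeries ℚ
  | 0, 0 => 1
  | 0, _ + 1 => 0
  | _ + 1, 0 => 1
  | N + 1, k + 1 => gb N (k + 1) + (X : PowerSeries ℚ) ^ (N - k) * gb N k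

@[simp] theorem gb_zero (N : ℕ) : gb N 0 = 1 := by cases N <;> rfl

theorem gb_eq_zero : ∀ {N k : ℕ}, N < k → gb N k = 0 := by
  intro N
  induction N with
  | zero => intro k hk; match k, hk with | k + 1, _ => rfl
  | succ N ih =>
    intro k hk
    match k, hk with
    | k + 1, hk =>
      show gb N (k + 1) + (X : PowerSeries ℚ) ^ (N - k) * gb N k = 0
      rw [ih (by omega), ih (by omega), mul_zero, add_zero]

/-- The key product identity `[N; l] * ∏_{i<l} (1 - X^(i+1)) = ∏_{i<l} (1 - X^(N+i+1-l))`. -/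
theorem gb_mul_prod : ∀ N l : ℕ,
    gb N l * ∏ i ∈ range l, (1 - (X : PowerSeries ℚ) ^ (i + 1)) =
      ∏ i ∈ range l, (1 - (X : PowerSeries ℚ) ^ (N + i + 1 - l)) := by
  intro N
  induction N with
  | zero =>
    intro l
    match l with
    | 0 => simp
    | l + 1 =>
      rw [gb_eq_zero (by omega), zero_mul]
      symm
      apply Finset.prod_eq_zero (Finset.mem_range.2 (show l < l + 1 by omega))
      have h0 : 0 + l + 1 - (l + 1) = 0 := by omega
      rw [h0, pow_zero, sub_self]
  | succ N ih =>
    intro l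
    match l with
    | 0 => simp
    | l + 1 =>
      by_cases hl : l ≤ N
      · show (gb N (l + 1) + (X : PowerSeries ℚ) ^ (N - l) * gb N l) * _ = _
        rw [add_mul]
        rw [Finset.prod_range_succ _ l]
        have h2 : (X : PowerSeries ℚ) ^ (N - l) * gb N l *
            ((∏ i ∈ range l, (1 - (X : PowerSeries ℚ) ^ (i + 1))) * (1 - X ^ (l + 1))) =
            (X : PowerSeries ℚ) ^ (N - l) * (1 - X ^ (l + 1)) *
              ∏ i ∈ range l, (1 - (X : PowerSeries ℚ) ^ (N + i + 1 - l)) := by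
          rw [← ih l]; ring
        rw [h2]
        have h1 : gb N (l + 1) * ((∏ i ∈ range l, (1 - (X : PowerSeries ℚ) ^ (i + 1))) *
            (1 - X ^ (l + 1))) =
            ∏ i ∈ range (l + 1), (1 - (X : PowerSeries ℚ) ^ (N + i + 1 - (l + 1))) := by
          rw [← ih (l + 1), Finset.prod_range_succ _ l]
        rw [h1]
        have h3 : ∏ i ∈ range (l + 1), (1 - (X : PowerSeries ℚ) ^ (N + i + 1 - (l + 1))) =
            (1 - X ^ (N - l)) * ∏ i ∈ range l, (1 - (X : PowerSeries ℚ) ^ (N + i + 1 - l)) := by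
          rw [Finset.prod_range_succ' _ l, mul_comm]
          congr 1
          · have h0 : N + 0 + 1 - (l + 1) = N - l := by omega
            rw [h0]
          · apply Finset.prod_congr rfl
            intro i _
            have h0 : N + (i + 1) + 1 - (l + 1) = N + i + 1 - l := by omega
            rw [h0]
        have h4 : ∏ i ∈ range (l + 1), (1 - (X : PowerSeries ℚ) ^ (N + 1 + i + 1 - (l + 1))) =
            (1 - X ^ (N + 1)) * ∏ i ∈ range l, (1 - (X : PowerSeries ℚ) ^ (N + i + 1 - l)) := by
          rw [Finset.prod_range_succ _ l, mul_comm]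
          congr 1
          · have h0 : N + 1 + l + 1 - (l + 1) = N + 1 := by omega
            rw [h0]
          · apply Finset.prod_congr rfl
            intro i _
            have h0 : N + 1 + i + 1 - (l + 1) = N + i + 1 - l := by omega
            rw [h0]
        rw [h3, h4]
        have hx : (X : PowerSeries ℚ) ^ (N - l) * X ^ (l + 1) = X ^ (N + 1) := by
          rw [← pow_add]
          congr 1
          omega
        have hsum : (1 - (X : PowerSeries ℚ) ^ (N - l)) *
              (∏ i ∈ range l, (1 - (X : PowerSeries ℚ) ^ (N + i + 1 - l))) +
            (X : PowerSeries ℚ) ^ (N - l) * (1 - X ^ (l + 1)) *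
              (∏ i ∈ range l, (1 - (X : PowerSeries ℚ) ^ (N + i + 1 - l))) =
            ((1 - (X : PowerSeries ℚ) ^ (N - l)) + X ^ (N - l) * (1 - X ^ (l + 1))) *
              (∏ i ∈ range l, (1 - (X : PowerSeries ℚ) ^ (N + i + 1 - l))) := by ring
        rw [hsum]
        congr 1
        rw [mul_sub, mul_one, hx]
        ring
      · rw [gb_eq_zero (by omega), zero_mul]
        symm
        apply Finset.prod_eq_zero (Finset.mem_range.2 (show l - N - 1 < l + 1 by omega))
        have h0 : N + 1 + (l - N - 1) + 1 - (l + 1) = 0 := by omega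
        rw [h0, pow_zero, sub_self]
end

end Aux
namespace Aux
open PowerSeries Finset
open scoped Classical
noncomputable section

theorem gb_succ_succ (N k : ℕ) :
    gb (N + 1) (k + 1) = gb N (k + 1) + (X : PowerSeries ℚ) ^ (N - k) * gb N k := rfl

theorem two_T (j : ℕ) : 2 * T j + j = j * j := by
  induction j with
  | zero => simp [T]
  | succ j ih =>
    rw [T_succ]
    calc 2 * (T j + j) + (j + 1) = 2 * T j + j + (2 * j + 1) := by ring
    _ = j * j + (2 * j + 1) := by rw [ih]
    _ = (j + 1) * (j + 1) := by ring

/-- q-binomial theorem, homogeneous version, as an identity of polynomials over power series. -/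
theorem binomialTheorem (y : PowerSeries ℚ) (N : ℕ) :
    ∏ i ∈ range N, (Polynomial.C y + Polynomial.X * Polynomial.C ((X : PowerSeries ℚ) ^ i)) =
      ∑ k ∈ range (N + 1),
        Polynomial.C ((X : PowerSeries ℚ) ^ T k * gb N k * y ^ (N - k)) * Polynomial.X ^ k := by
  induction N with
  | zero => simp [T]
  | succ N ih =>
    rw [Finset.prod_range_succ, ih, mul_add]
    have step1 : (∑ k ∈ range (N + 1),
          Polynomial.C ((X : PowerSeries ℚ) ^ T k * gb N k * y ^ (N - k)) * Polynomial.X ^ k) *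
          Polynomial.C y =
        ∑ k ∈ range (N + 2),
          Polynomial.C ((X : PowerSeries ℚ) ^ T k * gb N k * y ^ (N + 1 - k)) * Polynomial.X ^ k := by
      rw [Finset.sum_mul, Finset.sum_range_succ _ (N + 1), gb_eq_zero (show N < N + 1 by omega)]
      simp only [mul_zero, zero_mul, Polynomial.C_0, add_zero]
      apply Finset.sum_congr rfl
      intro k hk
      rw [Finset.mem_range] at hk
      have hy : (X : PowerSeries ℚ) ^ T k * gb N k * y ^ (N - k) * y =
          (X : PowerSeries ℚ) ^ T k * gb N k * y ^ (N + 1 - k) := by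
        have h1 : N + 1 - k = (N - k) + 1 := by omega
        rw [h1, pow_succ]
        ring
      rw [← hy]
      simp only [Polynomial.C_mul]
      ring
    have step2 : (∑ k ∈ range (N + 1),
          Polynomial.C ((X : PowerSeries ℚ) ^ T k * gb N k * y ^ (N - k)) * Polynomial.X ^ k) *
          (Polynomial.X * Polynomial.C ((X : PowerSeries ℚ) ^ N)) =
        ∑ k ∈ range (N + 1),
          Polynomial.C ((X : PowerSeries ℚ) ^ (T k + N) * gb N k * y ^ (N - k)) *
            Polynomial.X ^ (k + 1) := by
      rw [Finset.sum_mul]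
      apply Finset.sum_congr rfl
      intro k _
      simp only [pow_add, Polynomial.C_mul]
      ring
    rw [step1, step2]
    -- now combine into single sum over range (N + 2)
    rw [show (∑ k ∈ range (N + 1),
          Polynomial.C ((X : PowerSeries ℚ) ^ (T k + N) * gb N k * y ^ (N - k)) *
            Polynomial.X ^ (k + 1)) =
        ∑ k ∈ range (N + 2),
          (if h : k = 0 then 0 else
            Polynomial.C ((X : PowerSeries ℚ) ^ (T (k - 1) + N) * gb N (k - 1) * y ^ (N - (k - 1))) *
              Polynomial.X ^ k) from ?_]
    · rw [← Finset.sum_add_distrib]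
      apply Finset.sum_congr rfl
      intro k hk
      rw [Finset.mem_range] at hk
      match k with
      | 0 => simp
      | k + 1 =>
        rw [dif_neg (by omega)]
        simp only [Nat.add_sub_cancel]
        have hexp : T (k + 1) + (N - k) = T k + N := by
          have := T_succ k
          omega
        have hNk : N + 1 - (k + 1) = N - k := by omega
        rw [gb_succ_succ, hNk]
        have hpow : (X : PowerSeries ℚ) ^ T (k + 1) * (X : PowerSeries ℚ) ^ (N - k) =
            (X : PowerSeries ℚ) ^ (T k + N) := by rw [← pow_add, hexp]
        have harg : (X : PowerSeries ℚ) ^ T (k + 1) *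
              (gb N (k + 1) + (X : PowerSeries ℚ) ^ (N - k) * gb N k) * y ^ (N - k) =
            (X : PowerSeries ℚ) ^ T (k + 1) * gb N (k + 1) * y ^ (N - k) +
              (X : PowerSeries ℚ) ^ (T k + N) * gb N k * y ^ (N - k) := by
          linear_combination (gb N k * y ^ (N - k)) * hpow
        rw [harg, Polynomial.C_add, add_mul]
    · rw [Finset.sum_range_succ' _ (N + 1)]
      rw [dif_pos rfl, add_zero]
      apply Finset.sum_congr rfl
      intro k _
      rw [dif_neg (by omega)]
      simp only [Nat.add_sub_cancel]

def Dprod (n : ℕ) : PowerSeries ℚ := ∏ i ∈ range n, (1 + (X : PowerSeries ℚ) ^ (i + 1))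

/-- Evaluation of the product at the recentering point. -/
theorem prod_recenter (n : ℕ) (hn : 1 ≤ n) :
    ∏ i ∈ range (2 * n), ((X : PowerSeries ℚ) ^ n + (X : PowerSeries ℚ) ^ i) =
      (X : PowerSeries ℚ) ^ (T n + n * n) * 2 * (Dprod n * Dprod (n - 1)) := by
  rw [two_mul, Finset.prod_range_add]
  have h1 : ∏ i ∈ range n, ((X : PowerSeries ℚ) ^ n + (X : PowerSeries ℚ) ^ i) =
      (X : PowerSeries ℚ) ^ T n * Dprod n := by
    have : ∀ i ∈ range n, ((X : PowerSeries ℚ) ^ n + (X : PowerSeries ℚ) ^ i) =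
        (X : PowerSeries ℚ) ^ i * (1 + (X : PowerSeries ℚ) ^ (n - i)) := by
      intro i hi
      rw [Finset.mem_range] at hi
      rw [mul_add, mul_one, ← pow_add]
      have : i + (n - i) = n := by omega
      rw [this, add_comm]
    rw [Finset.prod_congr rfl this, Finset.prod_mul_distrib, Finset.prod_pow_eq_pow_sum]
    have hrefl : ∏ i ∈ range n, (1 + (X : PowerSeries ℚ) ^ (n - i)) = Dprod n := by
      rw [Dprod, ← Finset.prod_range_reflect]
      apply Finset.prod_congr rfl
      intro i hi
      rw [Finset.mem_range] at hi
      congr 2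
      omega
    rw [hrefl]
    rfl
  have h2 : ∏ i ∈ range n, ((X : PowerSeries ℚ) ^ n + (X : PowerSeries ℚ) ^ (n + i)) =
      (X : PowerSeries ℚ) ^ (n * n) * (2 * Dprod (n - 1)) := by
    have : ∀ i ∈ range n, ((X : PowerSeries ℚ) ^ n + (X : PowerSeries ℚ) ^ (n + i)) =
        (X : PowerSeries ℚ) ^ n * (1 + (X : PowerSeries ℚ) ^ i) := by
      intro i _
      rw [mul_add, mul_one, ← pow_add]
    rw [Finset.prod_congr rfl this, Finset.prod_mul_distrib, Finset.prod_const,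
      Finset.card_range, ← pow_mul]
    congr 1
    obtain ⟨m, rfl⟩ : ∃ m, n = m + 1 := ⟨n - 1, by omega⟩
    rw [Finset.prod_range_succ' _ m]
    simp only [pow_zero, Nat.add_sub_cancel]
    rw [Dprod]
    have h11 : (1 : PowerSeries ℚ) + 1 = 2 := by norm_num
    rw [h11]
    ring
  rw [h1, h2]
  rw [pow_add]
  ring

/-- exponent bookkeeping -/
def eexp (n k : ℕ) : ℕ := if n ≤ k then T (k - n) else T (n - k + 1)

theorem expo_eq (n k : ℕ) (hk : k ≤ 2 * n) :
    T k + n * (2 * n - k) = (T n + n * n) + eexp n k := by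
  rcases le_or_gt n k with h | h
  · obtain ⟨j, rfl⟩ : ∃ j, k = n + j := ⟨k - n, by omega⟩
    rw [eexp, if_pos h, Nat.add_sub_cancel_left, T_add]
    have h1 : 2 * n - (n + j) = n - j := by omega
    rw [h1]
    have hj : j ≤ n := by omega
    have h2 : n * (n - j) = n * n - n * j := by
      rw [Nat.mul_sub]
    have h3 : n * j ≤ n * n := Nat.mul_le_mul_left n hj
    omega
  · set j := n - k with hjdef
    have hj1 : k + j = n := by omega
    have h0 : ¬ n ≤ k := by omega
    rw [eexp, if_neg h0, T_succ]
    have hTn : T n = T k + T j + k * j := by rw [← hj1, T_add]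
    have h2T := two_T j
    have h2 : 2 * n - k = n + j := by omega
    rw [h2, ← hjdef]
    zify at hTn h2T ⊢
    have hn' : (n : ℤ) = k + j := by omega
    rw [hn']
    linear_combination -hTn - h2T

/-- The central identity: `∑_k X^(eexp n k) [2n; k] = 2 D_n D_{n-1}`. -/
theorem identityF (n : ℕ) (hn : 1 ≤ n) :
    ∑ k ∈ range (2 * n + 1), (X : PowerSeries ℚ) ^ eexp n k * gb (2 * n) k =
      2 * (Dprod n * Dprod (n - 1)) := by
  have hBT := binomialTheorem ((X : PowerSeries ℚ) ^ n) (2 * n)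
  have := congrArg (Polynomial.eval (1 : PowerSeries ℚ)) hBT
  rw [Polynomial.eval_prod, Polynomial.eval_finset_sum] at this
  simp only [Polynomial.eval_mul, Polynomial.eval_add, Polynomial.eval_C, Polynomial.eval_X,
    Polynomial.eval_pow, one_pow, mul_one, one_mul] at this
  rw [prod_recenter n hn] at this
  have key : (X : PowerSeries ℚ) ^ (T n + n * n) *
      ∑ k ∈ range (2 * n + 1), (X : PowerSeries ℚ) ^ eexp n k * gb (2 * n) k =
      (X : PowerSeries ℚ) ^ (T n + n * n) * (2 * (Dprod n * Dprod (n - 1))) := by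
    rw [Finset.mul_sum]
    have hterm : ∀ k ∈ range (2 * n + 1),
        (X : PowerSeries ℚ) ^ (T n + n * n) * ((X : PowerSeries ℚ) ^ eexp n k * gb (2 * n) k) =
        (X : PowerSeries ℚ) ^ T k * gb (2 * n) k * ((X : PowerSeries ℚ) ^ n) ^ (2 * n - k) := by
      intro k hk
      rw [Finset.mem_range] at hk
      rw [← pow_mul, ← mul_assoc, ← pow_add]
      rw [mul_comm ((X : PowerSeries ℚ) ^ T k) (gb (2 * n) k), mul_assoc, ← pow_add]
      rw [← expo_eq n k (by omega)]
      ring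
    rw [Finset.sum_congr rfl hterm]
    rw [← this]
    ring
  exact mul_left_cancel₀ (pow_ne_zero _ PowerSeries.X_ne_zero) key

end
end Aux
namespace Aux
open PowerSeries Finset
open scoped Classical
noncomputable section

theorem S1_eq_map (N : ℕ) : S1 N = (range N).map ⟨Nat.succ, Nat.succ_injective⟩ := by
  ext i
  simp only [S1, mem_filter, mem_range, mem_map, Function.Embedding.coeFn_mk]
  constructor
  · rintro ⟨h1, h2⟩
    exact ⟨i - 1, by omega, by omega⟩
  · rintro ⟨a, ha, rfl⟩
    omega

theorem prodS1 {M : Type*} [CommMonoid M] (N : ℕ) (f : ℕ → M) :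
    ∏ i ∈ S1 N, f i = ∏ i ∈ range N, f (i + 1) := by
  rw [S1_eq_map, Finset.prod_map]
  rfl

theorem constCoeff_one_sub_X_pow (i : ℕ) :
    constantCoeff (1 - (X : PowerSeries ℚ) ^ (i + 1)) ≠ 0 := by
  rw [RingHom.map_sub, RingHom.map_pow, constantCoeff_one, constantCoeff_X,
    zero_pow (Nat.succ_ne_zero i), sub_zero]
  exact one_ne_zero

/-- Stabilization: low coefficients of Gaussian binomials are partition numbers. -/
theorem gb_coeff {N l m : ℕ} (h1 : m ≤ l) (h2 : m + l ≤ N) :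
    coeff m (gb N l) = (pCount m : ℚ) := by
  have hQ := gb_mul_prod N l
  have hunit : (∏ i ∈ range l, (1 - (X : PowerSeries ℚ) ^ (i + 1))) *
      (∏ i ∈ range l, (1 - (X : PowerSeries ℚ) ^ (i + 1))⁻¹) = 1 := by
    rw [← Finset.prod_mul_distrib]
    apply Finset.prod_eq_one
    intro i _
    exact PowerSeries.mul_inv_cancel _ (constCoeff_one_sub_X_pow i)
  have hgb : gb N l = (∏ i ∈ range l, (1 - (X : PowerSeries ℚ) ^ (i + 1))⁻¹) *
      ∏ i ∈ range l, (1 - (X : PowerSeries ℚ) ^ (N + i + 1 - l)) := by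
    calc gb N l = gb N l * ((∏ i ∈ range l, (1 - (X : PowerSeries ℚ) ^ (i + 1))) *
        (∏ i ∈ range l, (1 - (X : PowerSeries ℚ) ^ (i + 1))⁻¹)) := by rw [hunit, mul_one]
    _ = (gb N l * ∏ i ∈ range l, (1 - (X : PowerSeries ℚ) ^ (i + 1))) *
        (∏ i ∈ range l, (1 - (X : PowerSeries ℚ) ^ (i + 1))⁻¹) := by ring
    _ = _ := by rw [hQ]; ring
  rw [hgb]
  rw [coeff_mul_prod_one_sub_of_lt_order m (range l) _
    (fun i => (X : PowerSeries ℚ) ^ (N + i + 1 - l))]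
  · rw [← prodS1 l fun i => (1 - (X : PowerSeries ℚ) ^ i)⁻¹]
    exact (pCount_coeff h1).symm
  · intro i hi
    rw [order_X_pow]
    rw [Finset.mem_range] at hi
    have : m < N + i + 1 - l := by omega
    exact_mod_cast this

theorem dCount_coeff_D {a n : ℕ} (h : a ≤ n) :
    coeff a (Dprod n) = (dCount a : ℚ) := by
  rw [Dprod, ← prodS1 n fun i => 1 + (X : PowerSeries ℚ) ^ i]
  exact (dCount_coeff h).symm

/-- The Gauss-type convolution identity. -/
theorem convIdentity (m : ℕ) :
    ∑ ab ∈ Finset.HasAntidiagonal.antidiagonal m, dCount ab.1 * dCount ab.2 =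
      ∑ j ∈ range (m + 1), if T (j + 1) ≤ m then pCount (m - T (j + 1)) else 0 := by
  set n := m + 2 with hn
  have hF := identityF n (by omega)
  have hc := congrArg (coeff m) hF
  rw [map_sum] at hc
  have hrhs : coeff m (2 * (Dprod n * Dprod (n - 1))) =
      2 * ∑ ab ∈ Finset.HasAntidiagonal.antidiagonal m, (dCount ab.1 : ℚ) * dCount ab.2 := by
    rw [two_mul, map_add, ← two_mul, coeff_mul]
    congr 1
    apply Finset.sum_congr rfl
    intro ab hab
    rw [Finset.HasAntidiagonal.mem_antidiagonal] at hab
    rw [dCount_coeff_D (show ab.1 ≤ n by omega), dCount_coeff_D (show ab.2 ≤ n - 1 by omega)]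
  set g : ℕ → ℚ := fun k => coeff m ((X : PowerSeries ℚ) ^ eexp n k * gb (2 * n) k) with hg
  set val : ℕ → ℚ := fun j => if T (j + 1) ≤ m then (pCount (m - T (j + 1)) : ℚ) else 0 with hval
  have hgA : ∀ j, j < n → g (n - j) = val j := by
    intro j hj
    have he : eexp n (n - j) = T (j + 1) := by
      rcases Nat.eq_zero_or_pos j with rfl | hjpos
      · rw [Nat.sub_zero, eexp, if_pos le_rfl, Nat.sub_self]
        rw [show T 1 = 0 from by simp [T], show T 0 = 0 from by simp [T]]
      · rw [eexp, if_neg (by omega)]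
        congr 1
        omega
    rw [hg]
    simp only
    rw [he, coeff_X_pow_mul']
    rw [hval]
    simp only
    split_ifs with hT
    · have hTj := T_ge j
      exact gb_coeff (by omega) (by omega)
    · rfl
  have hgB : ∀ j, j < n → g (n + 1 + j) = val j := by
    intro j hj
    have he : eexp n (n + 1 + j) = T (j + 1) := by
      rw [eexp, if_pos (by omega)]
      congr 1
      omega
    rw [hg]
    simp only
    rw [he, coeff_X_pow_mul']
    rw [hval]
    simp only
    split_ifs with hT
    · have hTj := T_ge j
      exact gb_coeff (by omega) (by omega)
    · rfl
  have hsplit : ∑ k ∈ range (2 * n + 1), g k = 2 * ∑ j ∈ range n, val j := by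
    rw [show 2 * n + 1 = (n + 1) + n from by omega, Finset.sum_range_add]
    have hA : ∑ k ∈ range (n + 1), g k = ∑ j ∈ range n, val j := by
      rw [Finset.sum_range_succ' g n]
      have hg0 : g 0 = 0 := by
        rw [hg]
        simp only
        have he0 : eexp n 0 = T (n + 1) := by
          rw [eexp, if_neg (by omega), Nat.sub_zero]
        rw [he0, coeff_X_pow_mul', if_neg (by have := T_ge n; omega)]
      rw [hg0, add_zero]
      calc ∑ k ∈ range n, g (k + 1) = ∑ j ∈ range n, (fun k => g (k + 1)) (n - 1 - j) :=
            (Finset.sum_range_reflect (fun k => g (k + 1)) n).symm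
      _ = ∑ j ∈ range n, val j := by
          apply Finset.sum_congr rfl
          intro j hj
          rw [Finset.mem_range] at hj
          simp only
          rw [show n - 1 - j + 1 = n - j from by omega]
          exact hgA j hj
    have hB : ∑ k ∈ range n, g (n + 1 + k) = ∑ j ∈ range n, val j := by
      apply Finset.sum_congr rfl
      intro j hj
      rw [Finset.mem_range] at hj
      exact hgB j hj
    rw [hA, hB, two_mul]
  rw [hsplit, hrhs] at hc
  have hcc := mul_left_cancel₀ (two_ne_zero (α := ℚ)) hc
  -- truncate range n = range (m+2) to range (m+1)
  rw [hn] at hcc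
  rw [show m + 2 = (m + 1) + 1 from rfl, Finset.sum_range_succ] at hcc
  have hlast : val (m + 1) = 0 := by
    rw [hval]
    simp only
    rw [if_neg (by have := T_ge (m + 1); omega)]
  rw [hlast, add_zero] at hcc
  -- now cast down to ℕ
  have hconv : ∀ j ∈ range (m + 1), val j =
      ((if T (j + 1) ≤ m then pCount (m - T (j + 1)) else 0 : ℕ) : ℚ) := by
    intro j _
    rw [hval]
    rw [apply_ite (fun x : ℕ => (x : ℚ))]
    simp
  rw [Finset.sum_congr rfl hconv] at hcc
  exact_mod_cast hcc.symm
end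
end Aux
namespace Aux
open PowerSeries Finset
open scoped Classical
noncomputable section

/-- `a` is a triangular number -/
def IsTri (a : ℕ) : Prop := ∃ j, T (j + 1) = a

theorem conv_tri (n : ℕ) :
    (∑ j ∈ range (n + 1), if T (j + 1) ≤ n then pCount (n - T (j + 1)) else 0) =
      ∑ k ∈ range (n + 1), if IsTri k then pCount (n - k) else 0 := by
  have hinj : ∀ x ∈ (range (n + 1)).filter fun j => T (j + 1) ≤ n,
      ∀ y ∈ (range (n + 1)).filter fun j => T (j + 1) ≤ n,
      (fun j => T (j + 1)) x = (fun j => T (j + 1)) y → x = y := by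
    intro x _ y _ hxy
    exact T_strictMono.injective hxy
  have himg : (((range (n + 1)).filter fun j => T (j + 1) ≤ n).image fun j => T (j + 1)) =
      (range (n + 1)).filter IsTri := by
    ext k
    simp only [mem_image, mem_filter, mem_range]
    constructor
    · rintro ⟨j, ⟨_, hj2⟩, rfl⟩
      exact ⟨by omega, ⟨j, rfl⟩⟩
    · rintro ⟨hk, j, rfl⟩
      exact ⟨j, ⟨by have := T_ge j; omega, by omega⟩, rfl⟩
  calc (∑ j ∈ range (n + 1), if T (j + 1) ≤ n then pCount (n - T (j + 1)) else 0)
      = ∑ j ∈ (range (n + 1)).filter fun j => T (j + 1) ≤ n, pCount (n - T (j + 1)) :=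
        (Finset.sum_filter _ _).symm
    _ = ∑ k ∈ (((range (n + 1)).filter fun j => T (j + 1) ≤ n).image fun j => T (j + 1)),
          pCount (n - k) := by rw [Finset.sum_image (f := fun k => pCount (n - k)) hinj]
    _ = ∑ k ∈ (range (n + 1)).filter IsTri, pCount (n - k) := by rw [himg]
    _ = ∑ k ∈ range (n + 1), if IsTri k then pCount (n - k) else 0 := Finset.sum_filter _ _

/-- the combined ℕ-level convolution identity -/
theorem conv_main (n : ℕ) :
    ∑ ab ∈ Finset.HasAntidiagonal.antidiagonal n, dCount ab.1 * dCount ab.2 =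
      ∑ ab ∈ Finset.HasAntidiagonal.antidiagonal n, (if IsTri ab.1 then 1 else 0) * pCount ab.2 := by
  rw [convIdentity n, conv_tri n, Finset.Nat.sum_antidiagonal_eq_sum_range_succ_mk]
  apply Finset.sum_congr rfl
  intro k _
  split_ifs <;> simp

-- char 2 helpers for `PowerSeries (ZMod 2)`
theorem PS2_neg (f : PowerSeries (ZMod 2)) : -f = f := by
  ext n
  rw [map_neg]
  exact CharTwo.neg_eq _

theorem PS2_sub (f g : PowerSeries (ZMod 2)) : f - g = f + g := by
  rw [sub_eq_add_neg, PS2_neg]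

theorem PS2_two : (2 : PowerSeries (ZMod 2)) = 0 := by
  have h1 : (2 : PowerSeries (ZMod 2)) = 1 + 1 := by norm_num
  rw [h1, ← PS2_sub 1 1, sub_self]

theorem PS2_frob (Y : PowerSeries (ZMod 2)) : (1 - Y) ^ 4 = 1 - Y ^ 4 := by
  linear_combination (-2 * Y + 3 * Y ^ 2 - 2 * Y ^ 3 + Y ^ 4) * PS2_two

/-- coefficientwise-up-to-`m` equality -/
def Em (m : ℕ) (f g : PowerSeries (ZMod 2)) : Prop :=
  ∀ n, n ≤ m → coeff n f = coeff n g

theorem Em_mul {m : ℕ} {f g : PowerSeries (ZMod 2)} (h : Em m f g) (u : PowerSeries (ZMod 2)) :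
    Em m (f * u) (g * u) := by
  intro n hn
  rw [coeff_mul, coeff_mul]
  apply Finset.sum_congr rfl
  intro ab hab
  rw [Finset.HasAntidiagonal.mem_antidiagonal] at hab
  rw [h ab.1 (by omega)]

theorem constCoeff_one_sub_X_pow' {α : Type*} [Field α] {i : ℕ} (hi : 0 < i) :
    constantCoeff (1 - (X : PowerSeries α) ^ i) ≠ 0 := by
  rw [RingHom.map_sub, RingHom.map_pow, constantCoeff_one, constantCoeff_X,
    zero_pow (by omega), sub_zero]
  exact one_ne_zero

/-- K : parity of the number of 4-regular partitions -/
theorem b4_parity (m : ℕ) :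
    (numRegularPartitions 4 m : ZMod 2) = if IsTri m then 1 else 0 := by
  set A : PowerSeries (ZMod 2) := ∏ i ∈ S1 m, (1 - X ^ i) with hA
  set Pinv : PowerSeries (ZMod 2) := ∏ i ∈ S1 m, (1 - X ^ i)⁻¹ with hPinv
  set G : PowerSeries (ZMod 2) := ∏ i ∈ S4 m, (1 - X ^ i)⁻¹ with hG
  set Θ : PowerSeries (ZMod 2) := indicatorSeries (ZMod 2) {a | IsTri a} with hΘ
  -- A as the distinct-partitions product
  have hAD : A = ∏ i ∈ S1 m, (1 + (X : PowerSeries (ZMod 2)) ^ i) := by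
    rw [hA]
    exact Finset.prod_congr rfl fun i _ => PS2_sub 1 (X ^ i)
  have hcoeffA : ∀ a, a ≤ m → coeff a A = (dCount a : ZMod 2) := by
    intro a ha
    rw [hAD]
    exact (dCount_coeff ha).symm
  have hcoeffP : ∀ a, a ≤ m → coeff a Pinv = (pCount a : ZMod 2) := by
    intro a ha
    exact (pCount_coeff ha).symm
  -- step 1 : A * A ≃ Θ * Pinv
  have h1 : Em m (A * A) (Θ * Pinv) := by
    intro n hn
    rw [coeff_mul, coeff_mul]
    have hL : ∑ ab ∈ Finset.HasAntidiagonal.antidiagonal n, coeff ab.1 A * coeff ab.2 A =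
        ((∑ ab ∈ Finset.HasAntidiagonal.antidiagonal n, dCount ab.1 * dCount ab.2 : ℕ) : ZMod 2) := by
      push_cast
      apply Finset.sum_congr rfl
      intro ab hab
      rw [Finset.HasAntidiagonal.mem_antidiagonal] at hab
      rw [hcoeffA ab.1 (by omega), hcoeffA ab.2 (by omega)]
    have hR : ∑ ab ∈ Finset.HasAntidiagonal.antidiagonal n, coeff ab.1 Θ * coeff ab.2 Pinv =
        ((∑ ab ∈ Finset.HasAntidiagonal.antidiagonal n, (if IsTri ab.1 then 1 else 0) * pCount ab.2 : ℕ) :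
          ZMod 2) := by
      push_cast
      apply Finset.sum_congr rfl
      intro ab hab
      rw [Finset.HasAntidiagonal.mem_antidiagonal] at hab
      rw [hcoeffP ab.2 (by omega), hΘ, coeff_indicator]
      simp only [Set.mem_setOf_eq]
    rw [hL, hR, conv_main n]
  -- step 2 : Pinv * A = 1
  have h2 : Pinv * A = 1 := by
    rw [hPinv, hA, ← Finset.prod_mul_distrib]
    apply Finset.prod_eq_one
    intro i hi
    exact PowerSeries.inv_mul_cancel _ (constCoeff_one_sub_X_pow' (S1_pos hi))
  -- step 3 : G * A = product over multiples of 4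
  set S4c : Finset ℕ := (range (m + 1)).filter fun i => 0 < i ∧ 4 ∣ i with hS4c
  have hsplit : S4 m ∪ S4c = S1 m ∧ Disjoint (S4 m) S4c := by
    constructor
    · ext i
      simp only [S4, S1, hS4c, Finset.mem_union, mem_filter, mem_range]
      constructor
      · rintro (⟨h1, h2⟩ | ⟨h1, h2⟩) <;> exact ⟨h1, h2.1⟩
      · rintro ⟨h1, h2⟩
        by_cases h4 : 4 ∣ i
        · exact Or.inr ⟨h1, h2, h4⟩
        · exact Or.inl ⟨h1, h2, h4⟩
    · rw [Finset.disjoint_left]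
      intro i hi1 hi2
      simp only [S4, mem_filter] at hi1
      simp only [hS4c, mem_filter] at hi2
      exact hi1.2.2 hi2.2.2
  have h3 : G * A = ∏ i ∈ S4c, (1 - (X : PowerSeries (ZMod 2)) ^ i) := by
    rw [hA, ← hsplit.1, Finset.prod_union hsplit.2, hG, ← mul_assoc, ← Finset.prod_mul_distrib]
    rw [Finset.prod_congr rfl fun i hi =>
      PowerSeries.inv_mul_cancel _ (constCoeff_one_sub_X_pow' (S4_pos hi)), Finset.prod_const_one,
      one_mul]
  -- step 4 : product over multiples of 4 = small product in X^4
  have h4 : ∏ i ∈ S4c, (1 - (X : PowerSeries (ZMod 2)) ^ i) =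
      ∏ i ∈ S1 (m / 4), (1 - (X : PowerSeries (ZMod 2)) ^ (4 * i)) := by
    rw [← Finset.prod_image (f := fun i => 1 - (X : PowerSeries (ZMod 2)) ^ i)
      (g := fun i => 4 * i) (fun x _ y _ h => by simp only [] at h; omega)]
    congr 1
    ext i
    simp only [hS4c, S1, mem_image, mem_filter, mem_range]
    constructor
    · rintro ⟨h1, h2, u, rfl⟩
      exact ⟨u, ⟨by omega, by omega⟩, rfl⟩
    · rintro ⟨u, ⟨h1, h2⟩, rfl⟩
      refine ⟨by omega, by omega, ⟨u, rfl⟩⟩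
  -- step 5 : small product ≃ big product (A^4)
  have h5 : Em m (∏ i ∈ S1 (m / 4), (1 - (X : PowerSeries (ZMod 2)) ^ (4 * i))) (A ^ 4) := by
    have hApow : A ^ 4 = ∏ i ∈ S1 m, (1 - (X : PowerSeries (ZMod 2)) ^ (4 * i)) := by
      rw [hA, ← Finset.prod_pow]
      apply Finset.prod_congr rfl
      intro i _
      rw [PS2_frob, ← pow_mul, mul_comm]
    rw [hApow]
    have hsub : S1 (m / 4) ⊆ S1 m := by
      intro i hi
      simp only [S1, mem_filter, mem_range] at hi ⊢
      omega
    intro n hn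
    rw [← Finset.prod_sdiff hsub, mul_comm]
    rw [coeff_mul_prod_one_sub_of_lt_order n (S1 m \ S1 (m / 4)) _
      (fun i => (X : PowerSeries (ZMod 2)) ^ (4 * i))]
    intro i hi
    rw [order_X_pow]
    simp only [S1, Finset.mem_sdiff, mem_filter, mem_range] at hi
    have h4i : m < 4 * i := by omega
    exact_mod_cast (by omega : n < 4 * i)
  -- chain : G * A ≃ Θ * A
  have h6 : Em m (G * A) (Θ * A) := by
    intro n hn
    rw [h3, h4, h5 n hn]
    -- now : coeff n (A^4) = coeff n (Θ * A)
    have hA4 : A ^ 4 = A * A * (A * A) := by ring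
    have e1 : Em m (A * A * (A * A)) (Θ * Pinv * (A * A)) := Em_mul h1 (A * A)
    have e2 : Θ * Pinv * (A * A) = Θ * A * (Pinv * A) := by ring
    rw [hA4, e1 n hn, e2, h2, mul_one]
  -- cancel A : G ≃ Θ
  have h7 : Em m G Θ := by
    intro n hn
    have hGa : G = G * A * Pinv := by
      rw [mul_assoc, mul_comm A Pinv, h2, mul_one]
    have hTa : Θ = Θ * A * Pinv := by
      rw [mul_assoc, mul_comm A Pinv, h2, mul_one]
    rw [hGa, hTa]
    exact Em_mul h6 Pinv n hn
  -- conclude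
  have hb4 := b4_coeff (α := ZMod 2) (le_refl m)
  rw [← hG] at hb4
  rw [hb4, h7 m le_rfl, hΘ, coeff_indicator]
  simp [Set.mem_setOf_eq]

end
end Aux
namespace Aux
open Finset
open scoped Classical
noncomputable section

theorem two_T' (i : ℕ) : 2 * T (i + 1) = i * i + i := by
  rw [T_succ]
  have := two_T i
  linarith

theorem tri_pair_sq {a b i j : ℕ} (ha : T (i + 1) = a) (hb : T (j + 1) = b) (hij : j ≤ i) :
    4 * (a + b) + 1 = (i + j + 1) ^ 2 + (i - j) ^ 2 := by
  have h2a : 2 * a = i * i + i := by rw [← ha]; exact two_T' i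
  have h2b : 2 * b = j * j + j := by rw [← hb]; exact two_T' j
  zify [hij] at h2a h2b ⊢
  linear_combination 2 * h2a + 2 * h2b

theorem no_tri_pair {N : ℕ} {P : ℕ} (hPp : P.Prime) (hP3 : P % 4 = 3)
    (hodd : ¬ Even (padicValNat P (4 * N + 1))) :
    ∀ ab ∈ Finset.HasAntidiagonal.antidiagonal N, ¬ (IsTri ab.1 ∧ IsTri ab.2) := by
  rintro ab hab ⟨⟨i, hi⟩, ⟨j, hj⟩⟩
  rw [Finset.HasAntidiagonal.mem_antidiagonal] at hab
  have hsq : ∃ x y : ℕ, 4 * N + 1 = x ^ 2 + y ^ 2 := by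
    rcases le_total j i with h | h
    · exact ⟨i + j + 1, i - j, by rw [← hab]; exact tri_pair_sq hi hj h⟩
    · refine ⟨j + i + 1, j - i, ?_⟩
      rw [← hab, add_comm ab.1 ab.2]
      exact tri_pair_sq hj hi h
  have hdvd : P ∣ 4 * N + 1 := by
    by_contra hd
    exact hodd (by rw [padicValNat.eq_zero_of_not_dvd hd]; exact Even.zero)
  exact hodd (Nat.eq_sq_add_sq_iff.mp hsq P (Nat.mem_primeFactors.mpr ⟨hPp, hdvd, by omega⟩) hP3)

theorem B_mod4 (N : ℕ) (h : ∀ ab ∈ Finset.HasAntidiagonal.antidiagonal N, ¬ (IsTri ab.1 ∧ IsTri ab.2)) :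
    B 4 N % 4 = 0 := by
  set τ : ℕ → ℕ := fun a => if IsTri a then 1 else 0 with hτ
  have hdecomp : ∀ a, ∃ g, numRegularPartitions 4 a = τ a + 2 * g := by
    intro a
    have hK := b4_parity a
    have hcast : (numRegularPartitions 4 a : ZMod 2) = (τ a : ZMod 2) := by
      rw [hK, hτ]
      simp only
      rw [apply_ite (fun x : ℕ => (x : ZMod 2))]
      norm_num
    have hmod := (ZMod.natCast_eq_natCast_iff _ _ _).1 hcast
    have hτle : τ a ≤ 1 := by rw [hτ]; simp only; split_ifs <;> omega
    unfold Nat.ModEq at hmod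
    exact ⟨(numRegularPartitions 4 a - τ a) / 2, by omega⟩
  choose g hg using hdecomp
  have h4 : (4 : ZMod 4) = 0 := by decide
  suffices hz : (B 4 N : ZMod 4) = 0 by
    have := (ZMod.natCast_eq_zero_iff _ 4).1 hz
    omega
  rw [B]
  push_cast
  have hterm : ∀ ab ∈ Finset.HasAntidiagonal.antidiagonal N,
      ((numRegularPartitions 4 ab.1 : ZMod 4) * (numRegularPartitions 4 ab.2 : ZMod 4)) =
      (τ ab.1 : ZMod 4) * (τ ab.2 : ZMod 4) +
        (2 * ((τ ab.1 : ZMod 4) * (g ab.2 : ZMod 4)) +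
          2 * ((τ ab.2 : ZMod 4) * (g ab.1 : ZMod 4))) := by
    intro ab _
    rw [hg ab.1, hg ab.2]
    push_cast
    linear_combination ((g ab.1 : ZMod 4) * (g ab.2 : ZMod 4)) * h4
  rw [Finset.sum_congr rfl hterm, Finset.sum_add_distrib]
  have hS0 : ∑ ab ∈ Finset.HasAntidiagonal.antidiagonal N, (τ ab.1 : ZMod 4) * (τ ab.2 : ZMod 4) = 0 := by
    apply Finset.sum_eq_zero
    intro ab hab
    have := h ab hab
    rw [hτ]
    simp only
    by_cases h1 : IsTri ab.1
    · rw [if_neg (fun h2 => this ⟨h1, h2⟩)]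
      norm_num
    · rw [if_neg h1]
      norm_num
  rw [hS0, zero_add, Finset.sum_add_distrib, ← Finset.mul_sum, ← Finset.mul_sum]
  have hswap : ∑ ab ∈ Finset.HasAntidiagonal.antidiagonal N, (τ ab.1 : ZMod 4) * (g ab.2 : ZMod 4) =
      ∑ ab ∈ Finset.HasAntidiagonal.antidiagonal N, (τ ab.2 : ZMod 4) * (g ab.1 : ZMod 4) := by
    rw [Finset.Nat.sum_antidiagonal_eq_sum_range_succ_mk,
      Finset.Nat.sum_antidiagonal_eq_sum_range_succ_mk]
    rw [← Finset.sum_range_reflect (fun k => ((τ (N - k) : ZMod 4) * (g k : ZMod 4))) (N + 1)]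
    apply Finset.sum_congr rfl
    intro k hk
    rw [Finset.mem_range] at hk
    simp only
    rw [show N + 1 - 1 - k = N - k from by omega, show N - (N - k) = k from by omega]
  rw [hswap]
  linear_combination (∑ ab ∈ Finset.HasAntidiagonal.antidiagonal N, (τ ab.2 : ZMod 4) * (g ab.1 : ZMod 4)) * h4

end
end Aux

/-- Let `p 0, ..., p k` be primes, each congruent to `3 (mod 4)`, and let `j` be an
integer not divisible by the last prime.  If `t` is the natural number with
`4 t = (p 0)^2 ... (p (k-1))^2 * (p k) * (4 j + p k) - 1`, then
`B 4 ((p 0)^2 ... (p k)^2 * n + t) = 0 (mod 4)` for every `n >= 1`. -/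

theorem stmt9 (k : ℕ) (n : ℕ) (hn : 0 < n) (p : Fin (k + 1) → ℕ)
    (hp : ∀ i, (p i).Prime) (hp3 : ∀ i, p i % 4 = 3)
    (j : ℤ) (hj : ¬ ((p (Fin.last k) : ℤ) ∣ j)) :
    ∀ t : ℕ,
      (4 * t : ℤ) =
        (∏ i : Fin k, (p i.castSucc : ℤ) ^ 2) * (p (Fin.last k) : ℤ) *
          (4 * j + (p (Fin.last k) : ℤ)) - 1 →
      B 4 ((∏ i : Fin k, (p i.castSucc) ^ 2) * (p (Fin.last k)) ^ 2 * n + t) % 4 = 0 := by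
  intro t ht
  set P : ℕ := p (Fin.last k) with hP
  set M : ℕ := ∏ i : Fin k, (p i.castSucc) ^ 2 with hM
  have hPp : P.Prime := hp _
  have hP3 : P % 4 = 3 := hp3 _
  have hP2 : 2 ≤ P := hPp.two_le
  have hMpos : 0 < M := by
    apply Finset.prod_pos
    intro i _
    exact pow_pos (hp _).pos 2
  set N : ℕ := M * P ^ 2 * n + t with hN
  have hMcast : ((M : ℕ) : ℤ) = ∏ i : Fin k, (p i.castSucc : ℤ) ^ 2 := by
    rw [hM]
    push_cast
    rfl
  -- key integer identity
  have hkey : ((4 * N + 1 : ℕ) : ℤ) = (M : ℤ) * P * (4 * P * n + 4 * j + P) := by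
    rw [hN]
    push_cast
    rw [hMcast]
    linear_combination ht
  -- positivity of the last factor
  have hc0 : (0 : ℤ) < 4 * j + P := by
    by_contra hcon
    push_neg at hcon
    have h1 : (0 : ℤ) < (M : ℤ) * P := by positivity
    have h2 : (M : ℤ) * P * (4 * j + P) ≤ 0 := mul_nonpos_of_nonneg_of_nonpos (le_of_lt h1) hcon
    have h3 : (M : ℤ) * P * (4 * j + P) = 4 * t + 1 := by
      rw [hMcast]
      linarith [ht]
    have ht0 : (0 : ℤ) ≤ (t : ℤ) := Int.natCast_nonneg t
    linarith
  have hcpos : (0 : ℤ) < 4 * P * n + 4 * j + P := by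
    have : (0 : ℤ) ≤ 4 * P * n := by positivity
    omega
  obtain ⟨cN, hcN⟩ : ∃ cN : ℕ, (cN : ℤ) = 4 * P * n + 4 * j + P :=
    ⟨(4 * P * n + 4 * j + P).toNat, Int.toNat_of_nonneg (le_of_lt hcpos)⟩
  have hcNpos : 0 < cN := by
    have : (0 : ℤ) < (cN : ℤ) := by rw [hcN]; exact hcpos
    exact_mod_cast this
  have hNat : 4 * N + 1 = M * P * cN := by
    have : ((4 * N + 1 : ℕ) : ℤ) = ((M * P * cN : ℕ) : ℤ) := by
      push_cast
      rw [hcN] at *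
      push_cast at hkey
      linarith [hkey]
    exact_mod_cast this
  -- P does not divide cN
  have hPc : ¬ P ∣ cN := by
    intro hd
    have hdz : (P : ℤ) ∣ (cN : ℤ) := Int.natCast_dvd_natCast.mpr hd
    rw [hcN] at hdz
    have hd4j : (P : ℤ) ∣ 4 * j := by
      have h1 : (4 : ℤ) * j = (4 * P * n + 4 * j + P) - P * (4 * n + 1) := by ring
      rw [h1]
      exact dvd_sub hdz (Dvd.intro _ rfl)
    have hPz : Prime (P : ℤ) := Nat.prime_iff_prime_int.mp hPp
    rcases hPz.dvd_mul.mp hd4j with h4 | hjj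
    · have h4n : P ∣ 4 := by exact_mod_cast h4
      have := Nat.le_of_dvd (by norm_num) h4n
      have hP3' : P = 3 := by omega
      rw [hP3'] at h4n
      norm_num at h4n
    · exact hj hjj
  -- valuation of 4N+1 at P is odd
  haveI : Fact P.Prime := ⟨hPp⟩
  have hMsq : M = (∏ i : Fin k, p i.castSucc) ^ 2 := by
    rw [hM, ← Finset.prod_pow]
  have hprodpos : 0 < ∏ i : Fin k, p i.castSucc := by
    apply Finset.prod_pos
    intro i _
    exact (hp _).pos
  have hval : padicValNat P (4 * N + 1) =
      2 * padicValNat P (∏ i : Fin k, p i.castSucc) + 1 := by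
    rw [hNat, padicValNat.mul (by positivity) (by omega), padicValNat.mul (by positivity)
      (by omega), hMsq, padicValNat.pow _ 2, padicValNat.self (by omega),
      padicValNat.eq_zero_of_not_dvd hPc]
  have hodd : ¬ Even (padicValNat P (4 * N + 1)) := by
    rw [hval]
    simp [Nat.even_add_one, parity_simps]
  exact Aux.B_mod4 N (Aux.no_tri_pair hPp hP3 hodd)
end
end

section
/- Let k be a non-negative integer and n a positive integer. Let p be a prime with p ≡ 3 (mod 4). Then for any integer j with j ≢ 0 (mod p), one has B₄( p^{2k+2} n + p^{2k+1} j + (p^{2k+2} − 1)/4 ) ≡ 0 (mod 4). (Since p ≡ 3 (mod 4), 4 divides p^{2k+2} − 1.) -/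
def tri (m : ℕ) : ℕ := m * (m + 1) / 2
lemma two_tri (m : ℕ) : 2 * tri m = m * (m + 1) := by
  have h : 2 ∣ m * (m + 1) := Nat.even_mul_succ_self m |>.two_dvd
  unfold tri; omega
lemma tri_add (a b : ℕ) : tri (a + b) = tri a + tri b + a * b := by
  have h1 := two_tri (a + b); have h2 := two_tri a; have h3 := two_tri b
  have : (a+b) * (a+b+1) = a*(a+1) + b*(b+1) + 2*(a*b) := by ring
  omega
lemma tri_succ (m : ℕ) : tri (m + 1) = tri m + (m + 1) := by
  have h := tri_add m 1; have h1 : tri 1 = 1 := rfl; omega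
lemma le_tri (m : ℕ) : m ≤ tri m := by
  have := two_tri m; nlinarith
lemma tri_strictMono : StrictMono tri := by
  apply strictMono_nat_of_lt_succ
  intro n; have := tri_succ n; omega


open PowerSeries Finset
open scoped Classical

noncomputable section GF

variable {α : Type*}

/-- A convenience constructor for the power series whose coefficients indicate a subset. -/
def indicatorSeries (α : Type*) [Semiring α] (s : Set ℕ) : PowerSeries α :=
  PowerSeries.mk fun n => if n ∈ s then 1 else 0

theorem coeff_indicator (s : Set ℕ) [Semiring α] (n : ℕ) :
    coeff n (indicatorSeries α s) = if n ∈ s then 1 else 0 :=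
  coeff_mk _ _

-- The main workhorse (copied from Archive/Wiedijk100Theorems/Partition.lean)
theorem partialGF_prop (α : Type*) [CommSemiring α] (n : ℕ) (s : Finset ℕ) (hs : ∀ i ∈ s, 0 < i)
    (c : ℕ → Set ℕ) (hc : ∀ i, i ∉ s → 0 ∈ c i) :
    #{p : n.Partition | (∀ j, p.parts.count j ∈ c j) ∧ ∀ j ∈ p.parts, j ∈ s} =
      coeff n (∏ i ∈ s, indicatorSeries α ((· * i) '' c i)) := by
  simp_rw [coeff_prod, coeff_indicator, prod_boole, sum_boole]
  apply congr_arg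
  simp only [mem_univ, forall_true_left, not_and, not_forall, exists_prop,
    Set.mem_image, not_exists]
  set φ : (a : Nat.Partition n) →
    a ∈ filter (fun p ↦ (∀ (j : ℕ), Multiset.count j p.parts ∈ c j) ∧ ∀ j ∈ p.parts, j ∈ s) univ →
    ℕ →₀ ℕ := fun p _ => {
      toFun := fun i => Multiset.count i p.parts • i
      support := Finset.filter (fun i => i ≠ 0) p.parts.toFinset
      mem_support_toFun := fun a => by
        simp only [smul_eq_mul, ne_eq, mul_eq_zero, Multiset.count_eq_zero]
        rw [not_or, not_not]
        simp only [Multiset.mem_toFinset, not_not, mem_filter] }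
  refine Finset.card_bij φ ?_ ?_ ?_
  · intro a ha
    simp only [φ, not_forall, not_exists, not_and, exists_prop, mem_filter]
    rw [mem_finsuppAntidiag]
    dsimp only [ne_eq, smul_eq_mul, id_eq, eq_mpr_eq_cast, le_eq_subset, Finsupp.coe_mk]
    simp only [mem_univ, forall_true_left, not_and, not_forall, exists_prop,
      mem_filter, true_and] at ha
    refine ⟨⟨?_, fun i ↦ ?_⟩, fun i _ ↦ ⟨a.parts.count i, ha.1 i, rfl⟩⟩
    · conv_rhs => simp [← a.parts_sum]
      rw [sum_multiset_count_of_subset _ s]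
      · simp only [smul_eq_mul]
      · intro i
        simp only [Multiset.mem_toFinset, not_not, mem_filter]
        apply ha.2
    · simp only [ne_eq, Multiset.mem_toFinset, not_not, mem_filter, and_imp]
      exact fun hi _ ↦ ha.2 i hi
  · intro p₁ hp₁ p₂ hp₂ h
    apply Nat.Partition.ext
    simp only [true_and, mem_univ, mem_filter] at hp₁ hp₂
    ext i
    simp only [φ, ne_eq, Multiset.mem_toFinset, not_not, smul_eq_mul, Finsupp.mk.injEq] at h
    by_cases hi : i = 0
    · rw [hi]
      rw [Multiset.count_eq_zero_of_notMem]
      · rw [Multiset.count_eq_zero_of_notMem]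
        intro a; exact Nat.lt_irrefl 0 (hs 0 (hp₂.2 0 a))
      intro a; exact Nat.lt_irrefl 0 (hs 0 (hp₁.2 0 a))
    · rw [← mul_left_inj' hi]
      rw [funext_iff] at h
      exact h.2 i
  · simp only [φ, mem_filter, mem_finsuppAntidiag, mem_univ, exists_prop, true_and, and_assoc]
    rintro f ⟨hf, hf₃, hf₄⟩
    have hf' : f ∈ finsuppAntidiag s n := mem_finsuppAntidiag.mpr ⟨hf, hf₃⟩
    simp only [mem_finsuppAntidiag] at hf'
    refine ⟨⟨∑ i ∈ s, Multiset.replicate (f i / i) i, ?_, ?_⟩, ?_, ?_, ?_⟩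
    · intro i hi
      simp only [exists_prop, Multiset.mem_sum, mem_map, Function.Embedding.coeFn_mk] at hi
      rcases hi with ⟨t, ht, z⟩
      apply hs
      rwa [Multiset.eq_of_mem_replicate z]
    · simp_rw [Multiset.sum_sum, Multiset.sum_replicate, Nat.nsmul_eq_mul]
      rw [← hf'.1]
      refine sum_congr rfl fun i hi => Nat.div_mul_cancel ?_
      rcases hf₄ i hi with ⟨w, _, hw₂⟩
      rw [← hw₂]
      exact dvd_mul_left _ _
    · intro i
      simp_rw [Multiset.count_sum', Multiset.count_replicate, sum_ite_eq']
      split_ifs with h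
      · rcases hf₄ i h with ⟨w, hw₁, hw₂⟩
        rwa [← hw₂, Nat.mul_div_cancel _ (hs i h)]
      · exact hc _ h
    · intro i hi
      rw [Multiset.mem_sum] at hi
      rcases hi with ⟨j, hj₁, hj₂⟩
      rwa [Multiset.eq_of_mem_replicate hj₂]
    · ext i
      simp_rw [Multiset.count_sum', Multiset.count_replicate, sum_ite_eq']
      simp only [ne_eq, Multiset.mem_toFinset, not_not, smul_eq_mul, ite_mul,
        zero_mul, Finsupp.coe_mk]
      split_ifs with h
      · apply Nat.div_mul_cancel
        rcases hf₄ i h with ⟨w, _, hw₂⟩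
        apply Dvd.intro_left _ hw₂
      · apply symm
        rw [← Finsupp.notMem_support_iff]
        exact notMem_mono hf'.2 h

/-- instantiation: 4-regular partitions -/
theorem regularGF_prop (n M : ℕ) (hM : n ≤ 4 * M) :
    (numRegularPartitions 4 n : ℤ) =
      coeff n (∏ i ∈ (Icc 1 (4*M)).filter (fun i => ¬ 4 ∣ i),
        indicatorSeries ℤ {k | ∃ d, k = d * i}) := by
  set S := (Icc 1 (4*M)).filter (fun i => ¬ 4 ∣ i) with hS
  have h := partialGF_prop ℤ n S (fun i hi => by
    rw [hS, mem_filter, mem_Icc] at hi; omega) (fun _ => Set.univ) (fun _ _ => trivial)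
  have himg : ∀ i : ℕ, ((· * i) '' Set.univ) = {k | ∃ d, k = d * i} := by
    intro i; ext k; simp [Set.mem_image, eq_comm]
  simp_rw [himg] at h
  rw [← h]
  congr 1
  rw [numRegularPartitions]
  apply Finset.card_bij (fun p _ => p)
  · intro a ha
    simp only [mem_filter, mem_univ, true_and, Set.mem_setOf_eq] at ha ⊢
    refine ⟨fun j => trivial, fun j hj => ?_⟩
    rw [hS, mem_filter, mem_Icc]
    have hj1 : 0 < j := a.parts_pos hj
    have hj2 : j ≤ n := by
      have := a.parts_sum
      calc j ≤ a.parts.sum := Multiset.single_le_sum (fun _ _ => Nat.zero_le _) _ hj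
        _ = n := a.parts_sum
    exact ⟨⟨hj1, by omega⟩, ha j hj⟩
  · intro a _ b _ h; exact h
  · intro b hb
    simp only [mem_filter, mem_univ, true_and, Set.mem_setOf_eq] at hb ⊢
    refine ⟨b, ?_, rfl⟩
    intro x hx
    have := hb.2 x hx
    rw [hS, mem_filter] at this
    exact this.2

/-- the indicator of multiples of i is the inverse of 1 - X^i -/
theorem indicator_mul_inv (i : ℕ) (hi : 0 < i) :
    indicatorSeries ℤ {k | ∃ d, k = d * i} * (1 - X ^ i) = 1 := by
  have hiff : ∀ n : ℕ, i ≤ n → ((∃ d, n = d * i) ↔ (∃ d, n - i = d * i)) := by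
    intro n hin
    constructor
    · rintro ⟨d, rfl⟩
      cases d with
      | zero => omega
      | succ d => exact ⟨d, by simp [Nat.succ_mul]⟩
    · rintro ⟨d, hd⟩
      exact ⟨d + 1, by have h' : n - i + i = n := by omega
                       rw [← h', hd]; ring⟩
  ext n
  rw [mul_sub, mul_one, map_sub, PowerSeries.coeff_one, coeff_indicator,
    PowerSeries.coeff_mul_X_pow', coeff_indicator]
  simp only [Set.mem_setOf_eq]
  by_cases h0 : n = 0
  · subst h0
    rw [if_pos ⟨0, by ring⟩, if_neg (by omega), if_pos rfl]
    ring
  · rw [if_neg h0]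
    rcases Nat.lt_or_ge n i with h | h
    · have hnm : ¬ ∃ d, n = d * i := by
        rintro ⟨d, rfl⟩
        rcases Nat.eq_zero_or_pos d with rfl | hd
        · omega
        · have : i ≤ d * i := Nat.le_mul_of_pos_left i hd; omega
      rw [if_neg hnm, if_neg (by omega)]
      ring
    · rw [if_pos h]
      by_cases hmem : ∃ d, n = d * i
      · rw [if_pos hmem, if_pos ((hiff n h).mp hmem)]; ring
      · rw [if_neg hmem, if_neg (fun hc => hmem ((hiff n h).mpr hc))]; ring

end GF

noncomputable section QBin

/-- truncated products ∏_{i=1}^{a} (1 - X^i) etc. -/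
def P (a : ℕ) : PowerSeries ℤ := ∏ i ∈ Icc 1 a, (1 - X ^ i)
def Q (a : ℕ) : PowerSeries ℤ := ∏ i ∈ Icc 1 a, (1 + X ^ i)
def PP (a : ℕ) : PowerSeries ℤ := ∏ i ∈ Icc 1 a, (1 - X ^ (2*i))

lemma P_succ (a : ℕ) : P (a+1) = P a * (1 - X^(a+1)) := by
  rw [P, P, Finset.prod_Icc_succ_top (by omega)]

lemma P_zero : P 0 = 1 := by simp [P]

/-- Gaussian binomial as integer power series, defined by the second Pascal rule. -/
def gb : ℕ → ℕ → PowerSeries ℤ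
  | 0, 0 => 1
  | 0, _+1 => 0
  | _+1, 0 => 1
  | n+1, k+1 => X^(n-k) * gb n k + gb n (k+1)

lemma gb_zero_right (n : ℕ) : gb n 0 = 1 := by cases n <;> rfl

lemma gb_eq_zero {n k : ℕ} (h : n < k) : gb n k = 0 := by
  induction n generalizing k with
  | zero => cases k with
    | zero => omega
    | succ k => rfl
  | succ n ih =>
    cases k with
    | zero => omega
    | succ k =>
      rw [gb, ih (by omega), ih (by omega)]
      ring

/-- Closed form: gb n k * P k * P (n-k) = P n for k ≤ n. -/
lemma gb_closed : ∀ n k : ℕ, k ≤ n → gb n k * P k * P (n-k) = P n := by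
  intro n
  induction n with
  | zero => intro k hk; interval_cases k; simp [gb, P_zero]
  | succ n ih =>
    intro k hk
    cases k with
    | zero => simp [gb_zero_right, P_zero]
    | succ k =>
      rw [gb]
      rcases Nat.lt_or_ge k n with hkn | hkn
      · -- k + 1 ≤ n
        have e1 : n + 1 - (k+1) = (n - k - 1) + 1 := by omega
        have e2 : n - k = (n - k - 1) + 1 := by omega
        rw [add_mul, add_mul]
        have t1 : X^(n-k) * gb n k * P (k+1) * P (n+1-(k+1))
            = (X^(n-k) * (1 - X^(k+1))) * (gb n k * P k * P (n - k)) := by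
          rw [P_succ k, e1, ← e2]
          ring
        have t2 : gb n (k+1) * P (k+1) * P (n+1-(k+1))
            = (1 - X^(n-k)) * (gb n (k+1) * P (k+1) * P (n - (k+1))) := by
          rw [e1]
          rw [show n - (k+1) = n - k - 1 by omega]
          rw [P_succ (n-k-1)]
          rw [show n - k - 1 + 1 = n - k by omega]
          ring
        rw [t1, t2, ih k (by omega), ih (k+1) (by omega), P_succ]
        have hx : (X:PowerSeries ℤ)^(n-k) * X^(k+1) = X^(n+1) := by
          rw [← pow_add]; congr 1; omega
        linear_combination (-(P n)) * hx
      · -- k = n: k+1 = n+1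
        have hk1 : k = n := by omega
        subst hk1
        rw [show gb k (k+1) = 0 from gb_eq_zero (by omega),
          show k - k = 0 by omega, pow_zero, one_mul, add_zero,
          show k + 1 - (k+1) = 0 by omega, P_zero, mul_one, P_succ]
        have h0 := ih k le_rfl
        rw [show k - k = 0 by omega, P_zero, mul_one] at h0
        linear_combination (1 - X^(k+1)) * h0
  
open Polynomial in
/-- Finite q-binomial theorem, reversed form. -/
lemma qbinom_thm : ∀ m : ℕ,
    (∏ k ∈ Icc 1 m, (Polynomial.X + Polynomial.C ((X:PowerSeries ℤ)^k)))
      = ∑ r ∈ Finset.range (m+1),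
          Polynomial.C ((X:PowerSeries ℤ)^(tri r) * gb m r) * Polynomial.X^(m - r) := by
  intro m
  induction m with
  | zero => simp [gb, tri]
  | succ m ih =>
    rw [Finset.prod_Icc_succ_top (by omega), ih]
    -- RHS target: expand sum over range (m+2)
    rw [Finset.sum_range_succ' (fun r => Polynomial.C ((X:PowerSeries ℤ)^(tri r) * gb (m+1) r) * Polynomial.X^(m + 1 - r))]
    -- f 0 term : C(gb (m+1) 0) * Z^(m+1) = Z^(m+1)
    have f0 : Polynomial.C ((X:PowerSeries ℤ)^(tri 0) * gb (m+1) 0) * Polynomial.X^(m+1-0)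
        = (Polynomial.X:Polynomial (PowerSeries ℤ))^(m+1) := by
      rw [gb_zero_right]; simp [tri]
    rw [f0]
    -- expand gb (m+1) (s+1)
    have hexp : ∀ s ∈ Finset.range (m+1),
        Polynomial.C ((X:PowerSeries ℤ)^(tri (s+1)) * gb (m+1) (s+1)) * Polynomial.X^(m + 1 - (s+1))
        = Polynomial.C ((X:PowerSeries ℤ)^(m+1)) * (Polynomial.C ((X:PowerSeries ℤ)^(tri s) * gb m s) * Polynomial.X^(m - s))
          + Polynomial.C ((X:PowerSeries ℤ)^(tri (s+1)) * gb m (s+1)) * Polynomial.X^(m - s) := by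
      intro s hs
      rw [Finset.mem_range] at hs
      rw [show gb (m+1) (s+1) = PowerSeries.X^(m-s) * gb m s + gb m (s+1) from rfl]
      rw [show m + 1 - (s+1) = m - s by omega]
      rw [mul_add, map_add, add_mul]
      congr 1
      have hetri : tri (s+1) + (m-s) = (m+1) + tri s := by
        rw [tri_succ]; omega
      have harg : (PowerSeries.X:PowerSeries ℤ)^(tri (s+1)) * (PowerSeries.X^(m-s) * gb m s)
          = PowerSeries.X^(m+1) * (PowerSeries.X^(tri s) * gb m s) := by
        calc (PowerSeries.X:PowerSeries ℤ)^(tri (s+1)) * (PowerSeries.X^(m-s) * gb m s)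
            = PowerSeries.X^(tri (s+1) + (m-s)) * gb m s := by rw [pow_add]; ring
          _ = PowerSeries.X^((m+1) + tri s) * gb m s := by rw [hetri]
          _ = PowerSeries.X^(m+1) * (PowerSeries.X^(tri s) * gb m s) := by rw [pow_add]; ring
      rw [harg, Polynomial.C_mul]
      ring
    rw [Finset.sum_congr rfl hexp, Finset.sum_add_distrib, ← Finset.mul_sum]
    -- match pieces:
    -- piece 1 : Σ * X should equal  X^(m+1) + Σ_s C(tri(s+1) gb m (s+1)) Z^(m-s)
    have piece1 : (∑ r ∈ Finset.range (m+1),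
          Polynomial.C ((X:PowerSeries ℤ)^(tri r) * gb m r) * Polynomial.X^(m - r)) * Polynomial.X
        = (Polynomial.X:Polynomial (PowerSeries ℤ))^(m+1)
          + ∑ s ∈ Finset.range (m+1),
              Polynomial.C ((X:PowerSeries ℤ)^(tri (s+1)) * gb m (s+1)) * Polynomial.X^(m - s) := by
      rw [Finset.sum_mul]
      -- peel the r=0 term of LHS
      rw [Finset.sum_range_succ' (fun r => Polynomial.C ((X:PowerSeries ℤ)^(tri r) * gb m r) * Polynomial.X^(m - r) * Polynomial.X)]
      rw [gb_zero_right]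
      have h0 : Polynomial.C ((X:PowerSeries ℤ)^(tri 0) * 1) * Polynomial.X^(m - 0) * Polynomial.X
          = (Polynomial.X:Polynomial (PowerSeries ℤ))^(m+1) := by
        simp [tri, pow_succ]
      rw [h0, add_comm]
      congr 1
      -- Σ_{s∈range m} C(tri(s+1) gb m (s+1)) Z^(m-s-1) * Z = Σ_{s ∈ range (m+1)} C(...) Z^(m-s)
      rw [Finset.sum_range_succ (fun s => Polynomial.C ((X:PowerSeries ℤ)^(tri (s+1)) * gb m (s+1)) * Polynomial.X^(m - s))]
      rw [gb_eq_zero (by omega)]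
      simp only [mul_zero, map_zero, zero_mul, add_zero]
      apply Finset.sum_congr rfl
      intro s hs
      rw [Finset.mem_range] at hs
      rw [show m - (s+1) = m - s - 1 by omega]
      rw [mul_assoc, ← pow_succ]
      rw [show m - s - 1 + 1 = m - s by omega]
    rw [mul_add, piece1]
    ring
end QBin

-- PART6 --

noncomputable section Endgame
open PowerSeries Finset
open scoped Classical

def psi (a : ℕ) : PowerSeries ℤ := ∑ m ∈ range a, X^(tri m)

def eexp (N r : ℕ) : ℕ := if N ≤ r then tri (r - N) else tri (N - r - 1)

lemma prod_Icc1_eq_range (f : ℕ → PowerSeries ℤ) (a : ℕ) :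
    ∏ k ∈ Icc 1 a, f k = ∏ i ∈ range a, f (i+1) := by
  induction a with
  | zero => simp
  | succ a ih => rw [Finset.prod_Icc_succ_top (by omega), ih, Finset.prod_range_succ]

lemma sum_Icc1_id (a : ℕ) : ∑ k ∈ Icc 1 a, k = tri a := by
  induction a with
  | zero => simp [tri]
  | succ a ih => rw [Finset.sum_Icc_succ_top (by omega), ih, tri_succ]

lemma exponent_id (N r : ℕ) (hr : r ≤ 2*N) :
    tri r + N * (2*N - r) = (tri N + N*N) + eexp N r := by
  rcases le_or_gt N r with h | h
  · rw [eexp, if_pos h]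
    obtain ⟨j, rfl⟩ : ∃ j, r = N + j := ⟨r - N, by omega⟩
    have h1 : tri (N + j) = tri N + tri j + N*j := tri_add N j
    have h2 : N*(N-j) + N*j = N*N := by rw [← Nat.mul_add]; congr 1; omega
    have h3 : 2*N - (N+j) = N - j := by omega
    have h4 : N + j - N = j := by omega
    rw [h3, h4]
    omega
  · rw [eexp, if_neg (by omega)]
    obtain ⟨m, hm, hmN, rfl⟩ : ∃ m, 1 ≤ m ∧ m ≤ N ∧ r = N - m :=
      ⟨N - r, by omega, by omega, by omega⟩
    have f1 : tri N = tri (N-m) + tri m + (N-m)*m := by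
      have := tri_add (N-m) m
      rw [show N - m + m = N by omega] at this
      omega
    have f2 : 2*tri m = m*m + m := by have := two_tri m; nlinarith [two_tri m]
    have f3 : tri m = tri (m-1) + m := by
      have := tri_succ (m-1); rw [show m - 1 + 1 = m by omega] at this; omega
    have f4 : (N-m)*m + m*m = N*m := by
      rw [← Nat.add_mul]; congr 1; omega
    have f5 : 2*N - (N-m) = N + m := by omega
    have f6 : N*(N+m) = N*N + N*m := by ring
    have f7 : N - (N - m) - 1 = m - 1 := by omega
    rw [f5, f6, f7]
    omega

lemma bilateral (N : ℕ) (hN : 1 ≤ N) :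
    2 * (Q (N-1) * Q N) = ∑ r ∈ range (2*N+1), (X:PowerSeries ℤ)^(eexp N r) * gb (2*N) r := by
  have h := qbinom_thm (2*N)
  have h2 := congrArg (Polynomial.eval ((X:PowerSeries ℤ)^N)) h
  simp only [Polynomial.eval_prod, Polynomial.eval_finset_sum, Polynomial.eval_mul,
    Polynomial.eval_pow, Polynomial.eval_add, Polynomial.eval_C, Polynomial.eval_X] at h2
  have hRHS : ∑ r ∈ range (2*N+1),
        (X:PowerSeries ℤ)^(tri r) * gb (2*N) r * ((X:PowerSeries ℤ)^N)^(2*N - r)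
      = X^(tri N + N*N) * ∑ r ∈ range (2*N+1), (X:PowerSeries ℤ)^(eexp N r) * gb (2*N) r := by
    rw [Finset.mul_sum]
    apply Finset.sum_congr rfl
    intro r hr; rw [mem_range] at hr
    rw [← pow_mul]
    calc (X:PowerSeries ℤ)^(tri r) * gb (2*N) r * X^(N*(2*N-r))
        = X^(tri r + N*(2*N-r)) * gb (2*N) r := by rw [pow_add]; ring
      _ = X^((tri N + N*N) + eexp N r) * gb (2*N) r := by rw [exponent_id N r (by omega)]
      _ = X^(tri N + N*N) * ((X:PowerSeries ℤ)^(eexp N r) * gb (2*N) r) := by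
          rw [pow_add]; ring
  have hA : ∏ k ∈ Ioc 0 N, ((X:PowerSeries ℤ)^N + X^k) = X^(tri N) * (2 * Q (N-1)) := by
    rw [← Finset.Icc_add_one_left_eq_Ioc, zero_add]
    have step1 : ∀ k ∈ Icc 1 N, ((X:PowerSeries ℤ)^N + X^k) = X^k * (1 + X^(N-k)) := by
      intro k hk; rw [mem_Icc] at hk
      rw [mul_add, mul_one, ← pow_add, show k + (N-k) = N by omega]; ring
    rw [Finset.prod_congr rfl step1, Finset.prod_mul_distrib,
      Finset.prod_pow_eq_pow_sum, sum_Icc1_id]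
    congr 1
    rw [prod_Icc1_eq_range (fun k => 1 + X^(N-k)) N]
    have step2 : ∀ i ∈ range N, (1 + (X:PowerSeries ℤ)^(N-(i+1))) = 1 + X^(N-1-i) := by
      intro i hi; congr 2; omega
    rw [Finset.prod_congr rfl step2,
      Finset.prod_range_reflect (fun j => 1 + (X:PowerSeries ℤ)^j) N]
    obtain ⟨N', rfl⟩ : ∃ N', N = N' + 1 := ⟨N - 1, by omega⟩
    rw [Finset.prod_range_succ' (fun j => 1 + (X:PowerSeries ℤ)^j) N']
    rw [show N' + 1 - 1 = N' by omega, Q, prod_Icc1_eq_range (fun i => 1 + X^i) N']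
    norm_num
    ring
  have hB : ∏ k ∈ Ioc N (2*N), ((X:PowerSeries ℤ)^N + X^k) = X^(N*N) * Q N := by
    have hset : Ioc N (2*N) = Ico (N+1) (2*N+1) := by
      ext x; simp only [mem_Ioc, mem_Ico]; omega
    rw [hset, Finset.prod_Ico_eq_prod_range, show 2*N+1-(N+1) = N by omega]
    have step : ∀ i ∈ range N, ((X:PowerSeries ℤ)^N + X^(N+1+i)) = X^N * (1 + X^(i+1)) := by
      intro i _
      rw [mul_add, mul_one, ← pow_add, show N + (i+1) = N+1+i by omega]
    rw [Finset.prod_congr rfl step, Finset.prod_mul_distrib, Finset.prod_const,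
      Finset.card_range, ← pow_mul, Q, prod_Icc1_eq_range (fun i => 1 + (X:PowerSeries ℤ)^i) N]
  have hLHS : ∏ k ∈ Icc 1 (2*N), ((X:PowerSeries ℤ)^N + X^k)
      = X^(tri N + N*N) * (2 * (Q (N-1) * Q N)) := by
    rw [show Icc 1 (2*N) = Ioc 0 (2*N) from Finset.Icc_add_one_left_eq_Ioc 0 (2*N),
      ← Finset.prod_Ioc_consecutive _ (Nat.zero_le N) (by omega),
      hA, hB, pow_add]
    ring
  rw [hLHS, hRHS] at h2
  exact mul_left_cancel₀ (pow_ne_zero _ X_ne_zero) h2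

-- congruence helpers
lemma cong_mul {K : ℕ} {A B C D : PowerSeries ℤ}
    (h1 : (X:PowerSeries ℤ)^K ∣ A - B) (h2 : (X:PowerSeries ℤ)^K ∣ C - D) :
    (X:PowerSeries ℤ)^K ∣ A*C - B*D := by
  have : A*C - B*D = (A-B)*C + B*(C-D) := by ring
  rw [this]
  exact dvd_add (h1.mul_right _) (h2.mul_left _)

lemma prod_cong_one {K : ℕ} (s : Finset ℕ) (f : ℕ → PowerSeries ℤ)
    (h : ∀ i ∈ s, (X:PowerSeries ℤ)^K ∣ f i - 1) :
    (X:PowerSeries ℤ)^K ∣ (∏ i ∈ s, f i) - 1 := by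
  classical
  induction s using Finset.induction_on with
  | empty => simp
  | @insert a s' hx ih =>
    rw [Finset.prod_insert hx]
    have : f a * (∏ i ∈ s', f i) - 1
        = (f a - 1) * (∏ i ∈ s', f i) + ((∏ i ∈ s', f i) - 1) := by ring
    rw [this]
    exact dvd_add ((h a (mem_insert_self _ _)).mul_right _)
      (ih (fun i hi => h i (mem_insert_of_mem hi)))

lemma P_split (a b : ℕ) (h : a ≤ b) : P b = P a * ∏ i ∈ Ioc a b, (1 - (X:PowerSeries ℤ)^i) := by
  rw [P, P, show Icc 1 a = Ioc 0 a from Finset.Icc_add_one_left_eq_Ioc 0 a,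
    show Icc 1 b = Ioc 0 b from Finset.Icc_add_one_left_eq_Ioc 0 b,
    ← Finset.prod_Ioc_consecutive _ (Nat.zero_le a) h]

lemma P_cong {n a b : ℕ} (hn : n ≤ a) (hab : a ≤ b) : (X:PowerSeries ℤ)^(n+1) ∣ P b - P a := by
  rw [P_split a b hab]
  have : P a * (∏ i ∈ Ioc a b, (1 - (X:PowerSeries ℤ)^i)) - P a
      = P a * ((∏ i ∈ Ioc a b, (1 - (X:PowerSeries ℤ)^i)) - 1) := by ring
  rw [this]
  apply Dvd.dvd.mul_left
  apply prod_cong_one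
  intro i hi
  rw [mem_Ioc] at hi
  have : (1 - (X:PowerSeries ℤ)^i) - 1 = -(X^i) := by ring
  rw [this]
  exact (pow_dvd_pow X (by omega)).neg_right
  
lemma P_cong' {n a b : ℕ} (ha : n ≤ a) (hb : n ≤ b) : (X:PowerSeries ℤ)^(n+1) ∣ P a - P b := by
  rcases le_total a b with h | h
  · have := P_cong ha h
    rw [show P a - P b = -(P b - P a) by ring]
    exact this.neg_right
  · exact P_cong hb h

lemma QP (a : ℕ) : Q a * P a = PP a := by
  rw [Q, P, PP, ← Finset.prod_mul_distrib]
  apply Finset.prod_congr rfl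
  intro i _
  rw [show 2*i = i*2 by ring, pow_mul]
  ring

lemma div2 {K : ℕ} {F : PowerSeries ℤ} (h : (X:PowerSeries ℤ)^K ∣ 2*F) :
    (X:PowerSeries ℤ)^K ∣ F := by
  rw [X_pow_dvd_iff] at h ⊢
  intro m hm
  have := h m hm
  rw [show (2 : PowerSeries ℤ) = PowerSeries.C (2:ℤ) from (map_ofNat _ 2).symm,
    coeff_C_mul] at this
  omega

lemma gauss_finite (n N : ℕ) (hN : 2*n+2 ≤ N) :
    (X:PowerSeries ℤ)^(n+1) ∣ PP N * PP (N-1) - P (2*N) * psi N := by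
  have h0 := bilateral N (by omega)
  have hterm : ∀ r ∈ range (2*N+1),
      (X:PowerSeries ℤ)^(n+1) ∣
        (X:PowerSeries ℤ)^(eexp N r) * gb (2*N) r * (P N * P (N-1))
          - (X:PowerSeries ℤ)^(eexp N r) * P (2*N) := by
    intro r hr
    rw [mem_range] at hr
    by_cases he : n + 1 ≤ eexp N r
    · exact dvd_sub (((pow_dvd_pow X he).mul_right _).mul_right _)
        ((pow_dvd_pow X he).mul_right _)
    · push_neg at he
      have hrange : N - n - 1 ≤ r ∧ r ≤ N + n := by
        rw [eexp] at he
        split_ifs at he with hc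
        · have := le_tri (r - N); omega
        · have := le_tri (N - r - 1); omega
      have hr2N : r ≤ 2*N := by omega
      have closed := gb_closed (2*N) r hr2N
      have congP1 : (X:PowerSeries ℤ)^(n+1) ∣ P N - P r := P_cong' (by omega) (by omega)
      have congP2 : (X:PowerSeries ℤ)^(n+1) ∣ P (N-1) - P (2*N - r) :=
        P_cong' (by omega) (by omega)
      have h5 : (X:PowerSeries ℤ)^(eexp N r) * gb (2*N) r * (P N * P (N-1))
            - (X:PowerSeries ℤ)^(eexp N r) * P (2*N)
          = ((X:PowerSeries ℤ)^(eexp N r) * gb (2*N) r)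
              * ((P N * P (N-1)) - (P r * P (2*N - r))) := by
        rw [← closed]; ring
      rw [h5]
      exact (cong_mul congP1 congP2).mul_left _
  have hsum : (X:PowerSeries ℤ)^(n+1) ∣
      (∑ r ∈ range (2*N+1), (X:PowerSeries ℤ)^(eexp N r) * gb (2*N) r) * (P N * P (N-1))
        - P (2*N) * (∑ r ∈ range (2*N+1), (X:PowerSeries ℤ)^(eexp N r)) := by
    rw [Finset.sum_mul, Finset.mul_sum, ← Finset.sum_sub_distrib]
    apply Finset.dvd_sum
    intro r hr
    have := hterm r hr
    rw [show P (2*N) * (X:PowerSeries ℤ)^(eexp N r) = (X:PowerSeries ℤ)^(eexp N r) * P (2*N) by ring]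
    exact this
  have esum : (∑ r ∈ range (2*N+1), (X:PowerSeries ℤ)^(eexp N r)) = psi N + psi (N+1) := by
    rw [Finset.range_eq_Ico, ← Finset.sum_Ico_consecutive _ (Nat.zero_le N) (by omega)]
    congr 1
    · rw [← Finset.range_eq_Ico]
      have step : ∀ r ∈ range N, (X:PowerSeries ℤ)^(eexp N r) = X^(tri (N-1-r)) := by
        intro r hr; rw [mem_range] at hr
        rw [eexp, if_neg (by omega)]
        congr 2
        omega
      rw [Finset.sum_congr rfl step,
        Finset.sum_range_reflect (fun j => (X:PowerSeries ℤ)^(tri j)) N]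
      rfl
    · rw [Finset.sum_Ico_eq_sum_range]
      have step : ∀ i ∈ range (2*N+1-N), (X:PowerSeries ℤ)^(eexp N (N+i)) = X^(tri i) := by
        intro i hi
        rw [eexp, if_pos (by omega), show N + i - N = i by omega]
      rw [Finset.sum_congr rfl step, show 2*N+1-N = N+1 by omega]
      rfl
  have hpsi : psi (N+1) = psi N + X^(tri N) := by
    rw [psi, psi, Finset.sum_range_succ]
  have htail : (X:PowerSeries ℤ)^(n+1) ∣ P (2*N) * X^(tri N) := by
    have : n + 1 ≤ tri N := by have := le_tri N; omega
    exact (pow_dvd_pow X this).mul_left _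
  -- combine
  have hmain : (X:PowerSeries ℤ)^(n+1) ∣
      2 * (PP N * PP (N-1)) - P (2*N) * (2 * psi N) := by
    have e1 : 2 * (PP N * PP (N-1))
        = (∑ r ∈ range (2*N+1), (X:PowerSeries ℤ)^(eexp N r) * gb (2*N) r) * (P N * P (N-1)) := by
      rw [← h0, ← QP N, ← QP (N-1)]
      ring
    rw [esum, hpsi] at hsum
    rw [e1]
    have hrearr : (∑ r ∈ range (2*N+1), (X:PowerSeries ℤ)^(eexp N r) * gb (2*N) r) * (P N * P (N-1))
          - P (2*N) * (2 * psi N)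
        = ((∑ r ∈ range (2*N+1), (X:PowerSeries ℤ)^(eexp N r) * gb (2*N) r) * (P N * P (N-1))
            - P (2*N) * (psi N + (psi N + X^(tri N))))
          + P (2*N) * X^(tri N) := by ring
    rw [hrearr]
    exact dvd_add hsum htail
  have : 2 * (PP N * PP (N-1)) - P (2*N) * (2 * psi N)
      = 2 * (PP N * PP (N-1) - P (2*N) * psi N) := by ring
  rw [this] at hmain
  exact div2 hmain

end Endgame

noncomputable section Mod2
open PowerSeries Finset
open scoped Classical

def phi2 : PowerSeries ℤ →+* PowerSeries (ZMod 2) := PowerSeries.map (Int.castRingHom (ZMod 2))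
def P2 (a : ℕ) : PowerSeries (ZMod 2) := ∏ i ∈ Icc 1 a, (1 - X^i)
def psi2 (a : ℕ) : PowerSeries (ZMod 2) := ∑ m ∈ range a, X^(tri m)

lemma two_zero2 : (2 : PowerSeries (ZMod 2)) = 0 := by
  rw [← map_ofNat (PowerSeries.C (R := ZMod 2)) 2, show ((2:ZMod 2)) = 0 by decide, map_zero]

lemma phi2_P (a : ℕ) : phi2 (P a) = P2 a := by
  rw [P, P2, map_prod]
  apply Finset.prod_congr rfl
  intro i _
  rw [map_sub, map_one, map_pow, phi2, PowerSeries.map_X]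

lemma phi2_PP (a : ℕ) : phi2 (PP a) = (P2 a)^2 := by
  rw [PP, P2, map_prod, ← Finset.prod_pow]
  apply Finset.prod_congr rfl
  intro i _
  rw [map_sub, map_one, map_pow, phi2, PowerSeries.map_X]
  linear_combination ((X:PowerSeries (ZMod 2))^i - X^(2*i)) * two_zero2

lemma phi2_psi (a : ℕ) : phi2 (psi a) = psi2 a := by
  rw [psi, psi2, map_sum]
  apply Finset.sum_congr rfl
  intro m _
  rw [map_pow, phi2, PowerSeries.map_X]

lemma quad2 (j : ℕ) : (1 - (X:PowerSeries (ZMod 2))^j)^4 = 1 - X^(4*j) := by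
  linear_combination ((X:PowerSeries (ZMod 2))^(4*j) - 2*(X:PowerSeries (ZMod 2))^(3*j)
    + 3*(X:PowerSeries (ZMod 2))^(2*j) - 2*(X:PowerSeries (ZMod 2))^j) * two_zero2

lemma cong_mul2 {K : ℕ} {A B C D : PowerSeries (ZMod 2)}
    (h1 : (X:PowerSeries (ZMod 2))^K ∣ A - B) (h2 : (X:PowerSeries (ZMod 2))^K ∣ C - D) :
    (X:PowerSeries (ZMod 2))^K ∣ A*C - B*D := by
  have : A*C - B*D = (A-B)*C + B*(C-D) := by ring
  rw [this]
  exact dvd_add (h1.mul_right _) (h2.mul_left _)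

lemma cong_trans2 {K : ℕ} {A B C : PowerSeries (ZMod 2)}
    (h1 : (X:PowerSeries (ZMod 2))^K ∣ A - B) (h2 : (X:PowerSeries (ZMod 2))^K ∣ B - C) :
    (X:PowerSeries (ZMod 2))^K ∣ A - C := by
  have : A - C = (A - B) + (B - C) := by ring
  rw [this]; exact dvd_add h1 h2

lemma prod_cong_one2 {K : ℕ} (s : Finset ℕ) (f : ℕ → PowerSeries (ZMod 2))
    (h : ∀ i ∈ s, (X:PowerSeries (ZMod 2))^K ∣ f i - 1) :
    (X:PowerSeries (ZMod 2))^K ∣ (∏ i ∈ s, f i) - 1 := by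
  classical
  induction s using Finset.induction_on with
  | empty => simp
  | @insert a s' hx ih =>
    rw [Finset.prod_insert hx]
    have : f a * (∏ i ∈ s', f i) - 1
        = (f a - 1) * (∏ i ∈ s', f i) + ((∏ i ∈ s', f i) - 1) := by ring
    rw [this]
    exact dvd_add ((h a (mem_insert_self _ _)).mul_right _)
      (ih (fun i hi => h i (mem_insert_of_mem hi)))

lemma P2_cong {n a b : ℕ} (hn : n ≤ a) (hab : a ≤ b) :
    (X:PowerSeries (ZMod 2))^(n+1) ∣ P2 b - P2 a := by
  have hsplit : P2 b = P2 a * ∏ i ∈ Ioc a b, (1 - (X:PowerSeries (ZMod 2))^i) := by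
    rw [P2, P2, show Icc 1 a = Ioc 0 a from Finset.Icc_add_one_left_eq_Ioc 0 a,
      show Icc 1 b = Ioc 0 b from Finset.Icc_add_one_left_eq_Ioc 0 b,
      ← Finset.prod_Ioc_consecutive _ (Nat.zero_le a) hab]
  rw [hsplit]
  have : P2 a * (∏ i ∈ Ioc a b, (1 - (X:PowerSeries (ZMod 2))^i)) - P2 a
      = P2 a * ((∏ i ∈ Ioc a b, (1 - (X:PowerSeries (ZMod 2))^i)) - 1) := by ring
  rw [this]
  apply Dvd.dvd.mul_left
  apply prod_cong_one2
  intro i hi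
  rw [mem_Ioc] at hi
  have : (1 - (X:PowerSeries (ZMod 2))^i) - 1 = -(X^i) := by ring
  rw [this]
  exact (pow_dvd_pow X (by omega)).neg_right

lemma P2_cong' {n a b : ℕ} (ha : n ≤ a) (hb : n ≤ b) :
    (X:PowerSeries (ZMod 2))^(n+1) ∣ P2 a - P2 b := by
  rcases le_total a b with h | h
  · have := P2_cong ha h
    rw [show P2 a - P2 b = -(P2 b - P2 a) by ring]
    exact this.neg_right
  · exact P2_cong hb h

lemma constantCoeff_P2 (a : ℕ) : constantCoeff (R := ZMod 2) (P2 a) = 1 := by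
  rw [P2, map_prod]
  apply Finset.prod_eq_one
  intro i hi
  rw [mem_Icc] at hi
  rw [map_sub, map_one, map_pow, constantCoeff_X, zero_pow (by omega), sub_zero]

lemma unit_cancel {u D : PowerSeries (ZMod 2)} (hu : constantCoeff (R := ZMod 2) u = 1) {K : ℕ}
    (h : (X:PowerSeries (ZMod 2))^K ∣ u * D) : (X:PowerSeries (ZMod 2))^K ∣ D := by
  obtain ⟨g, hg⟩ : (X:PowerSeries (ZMod 2)) ∣ (1 - u) := by
    rw [X_dvd_iff, map_sub, map_one, hu, sub_self]
  suffices H : ∀ k, k ≤ K → (X:PowerSeries (ZMod 2))^k ∣ D from H K le_rfl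
  intro k
  induction k with
  | zero => intro _; simp
  | succ k ih =>
    intro hk
    have hD : (X:PowerSeries (ZMod 2))^k ∣ D := ih (by omega)
    have hD2 : D = u*D + X*(g*D) := by linear_combination D * hg
    rw [hD2]
    apply dvd_add
    · exact dvd_trans (pow_dvd_pow X hk) h
    · rw [pow_succ']
      exact mul_dvd_mul (dvd_refl X) (hD.mul_left g)

lemma cong_refl2 {K : ℕ} (A : PowerSeries (ZMod 2)) :
    (X:PowerSeries (ZMod 2))^K ∣ A - A := by simp

lemma cong_symm2 {K : ℕ} {A B : PowerSeries (ZMod 2)}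
    (h : (X:PowerSeries (ZMod 2))^K ∣ A - B) : (X:PowerSeries (ZMod 2))^K ∣ B - A := by
  rw [show B - A = -(A - B) by ring]
  exact h.neg_right

/-- Gauss: the parity of the number of 4-regular partitions detects triangular numbers. -/
lemma key_parity (n : ℕ) :
    numRegularPartitions 4 n % 2 = (if ∃ r, tri r = n then 1 else 0) := by
  set M := n + 1 with hM
  set N := 2*n + 2 with hN
  set S := (Icc 1 (4*M)).filter (fun i => ¬ 4 ∣ i) with hS
  set Y : PowerSeries ℤ := ∏ i ∈ S, indicatorSeries ℤ {k | ∃ d, k = d * i} with hY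
  have hY1 : Y * (∏ i ∈ S, (1 - (X:PowerSeries ℤ)^i)) = 1 := by
    rw [hY, ← Finset.prod_mul_distrib]
    apply Finset.prod_eq_one
    intro i hi
    rw [hS, mem_filter, mem_Icc] at hi
    exact indicator_mul_inv i (by omega)
  have hfilter : ∏ i ∈ (Icc 1 (4*M)).filter (fun i => (4:ℕ) ∣ i), (1 - (X:PowerSeries ℤ)^i)
      = ∏ j ∈ Icc 1 M, (1 - (X:PowerSeries ℤ)^(4*j)) := by
    apply Finset.prod_nbij' (fun k => k / 4) (fun a => 4 * a)
    · intro k hk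
      rw [mem_filter, mem_Icc] at hk
      rw [mem_Icc]
      obtain ⟨d, rfl⟩ := hk.2
      rw [Nat.mul_div_cancel_left d (by norm_num : 0 < 4)]
      omega
    · intro a ha
      rw [mem_Icc] at ha
      rw [mem_filter, mem_Icc]
      exact ⟨⟨by omega, by omega⟩, ⟨a, rfl⟩⟩
    · intro k hk
      rw [mem_filter] at hk
      obtain ⟨d, rfl⟩ := hk.2
      rw [Nat.mul_div_cancel_left d (by norm_num : 0 < 4)]
    · intro a _; omega
    · intro k hk
      rw [mem_filter] at hk
      obtain ⟨d, rfl⟩ := hk.2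
      rw [Nat.mul_div_cancel_left d (by norm_num : 0 < 4)]
  have hsplit : (∏ j ∈ Icc 1 M, (1 - (X:PowerSeries ℤ)^(4*j)))
      * (∏ i ∈ S, (1 - (X:PowerSeries ℤ)^i)) = P (4*M) := by
    rw [P, ← hfilter, hS]
    exact Finset.prod_filter_mul_prod_filter_not (Icc 1 (4*M)) (fun i => (4:ℕ) ∣ i) _
  have hYP : Y * P (4*M) = ∏ j ∈ Icc 1 M, (1 - (X:PowerSeries ℤ)^(4*j)) := by
    rw [← hsplit]
    calc Y * ((∏ j ∈ Icc 1 M, (1 - (X:PowerSeries ℤ)^(4*j))) * ∏ i ∈ S, (1 - (X:PowerSeries ℤ)^i))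
        = (Y * ∏ i ∈ S, (1 - (X:PowerSeries ℤ)^i)) * ∏ j ∈ Icc 1 M, (1 - (X:PowerSeries ℤ)^(4*j)) := by
          ring
      _ = ∏ j ∈ Icc 1 M, (1 - (X:PowerSeries ℤ)^(4*j)) := by rw [hY1, one_mul]
  -- map to ZMod 2
  set Y2 := phi2 Y with hY2
  have hYP2 : Y2 * P2 (4*M) = (P2 M)^4 := by
    have h := congrArg phi2 hYP
    rw [map_mul, phi2_P] at h
    rw [hY2, h, map_prod]
    rw [P2, ← Finset.prod_pow]
    apply Finset.prod_congr rfl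
    intro j _
    rw [map_sub, map_one, map_pow, phi2, PowerSeries.map_X, quad2]
  -- Gauss mod 2
  have hgauss := gauss_finite n N (by omega)
  have hgauss2 : (X:PowerSeries (ZMod 2))^(n+1) ∣
      (P2 N)^2 * (P2 (N-1))^2 - P2 (2*N) * psi2 N := by
    have hd := map_dvd phi2 hgauss
    rw [map_sub, map_mul, map_mul, map_pow, phi2_PP, phi2_PP, phi2_P, phi2_psi] at hd
    rw [show phi2 X = X from PowerSeries.map_X _] at hd
    exact hd
  -- congruences
  have c1 : (X:PowerSeries (ZMod 2))^(n+1) ∣ P2 N - P2 n := P2_cong' (by omega) le_rfl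
  have c2 : (X:PowerSeries (ZMod 2))^(n+1) ∣ P2 (N-1) - P2 n := P2_cong' (by omega) le_rfl
  have c3 : (X:PowerSeries (ZMod 2))^(n+1) ∣ P2 (2*N) - P2 n := P2_cong' (by omega) le_rfl
  have c4 : (X:PowerSeries (ZMod 2))^(n+1) ∣ P2 n - P2 (4*M) := P2_cong' le_rfl (by omega)
  have c5 : (X:PowerSeries (ZMod 2))^(n+1) ∣ P2 M - P2 n := P2_cong' (by omega) le_rfl
  have d1 : (X:PowerSeries (ZMod 2))^(n+1) ∣ (P2 N)^2 * (P2 (N-1))^2 - (P2 n)^4 := by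
    have h := cong_mul2 (cong_mul2 c1 c1) (cong_mul2 c2 c2)
    rw [show (P2 N)^2 * (P2 (N-1))^2 - (P2 n)^4
      = (P2 N * P2 N) * (P2 (N-1) * P2 (N-1)) - (P2 n * P2 n) * (P2 n * P2 n) by ring]
    exact h
  have d2 : (X:PowerSeries (ZMod 2))^(n+1) ∣ (P2 n)^4 - P2 (2*N) * psi2 N :=
    cong_trans2 (cong_symm2 d1) hgauss2
  have d3 : (X:PowerSeries (ZMod 2))^(n+1) ∣ P2 (2*N) * psi2 N - P2 n * psi2 N :=
    cong_mul2 c3 (cong_refl2 _)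
  have dA : (X:PowerSeries (ZMod 2))^(n+1) ∣ (P2 n)^4 - P2 n * psi2 N := cong_trans2 d2 d3
  have e1 : (X:PowerSeries (ZMod 2))^(n+1) ∣ Y2 * P2 n - Y2 * P2 (4*M) :=
    cong_mul2 (cong_refl2 Y2) c4
  have e2 : (X:PowerSeries (ZMod 2))^(n+1) ∣ Y2 * P2 (4*M) - (P2 n)^4 := by
    rw [hYP2]
    have h := cong_mul2 (cong_mul2 c5 c5) (cong_mul2 c5 c5)
    rw [show (P2 M)^4 - (P2 n)^4
      = (P2 M * P2 M) * (P2 M * P2 M) - (P2 n * P2 n) * (P2 n * P2 n) by ring]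
    exact h
  have eB : (X:PowerSeries (ZMod 2))^(n+1) ∣ Y2 * P2 n - P2 n * psi2 N :=
    cong_trans2 (cong_trans2 e1 e2) dA
  have hfin : (X:PowerSeries (ZMod 2))^(n+1) ∣ Y2 - psi2 N := by
    apply unit_cancel (constantCoeff_P2 n)
    rw [show P2 n * (Y2 - psi2 N) = Y2 * P2 n - P2 n * psi2 N by ring]
    exact eB
  -- coefficient extraction
  have hco : (coeff (R := ZMod 2) n) Y2 = (coeff (R := ZMod 2) n) (psi2 N) := by
    rw [X_pow_dvd_iff] at hfin
    have := hfin n (by omega)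
    rw [map_sub] at this
    exact sub_eq_zero.mp this
  have hcoY : (coeff (R := ZMod 2) n) Y2 = ((numRegularPartitions 4 n : ℕ) : ZMod 2) := by
    rw [hY2, phi2, PowerSeries.coeff_map]
    rw [hY, hS]
    rw [← regularGF_prop n M (by omega)]
    simp
  have hcoPsi : (coeff (R := ZMod 2) n) (psi2 N) = if ∃ r, tri r = n then (1:ZMod 2) else 0 := by
    rw [psi2, map_sum]
    simp_rw [coeff_X_pow]
    rw [Finset.sum_boole]
    have hcard : ((range N).filter (fun m => n = tri m)).card
        = if ∃ r, tri r = n then 1 else 0 := by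
      split_ifs with hex
      · obtain ⟨r, hr⟩ := hex
        rw [Finset.card_eq_one]
        refine ⟨r, ?_⟩
        ext m
        simp only [mem_filter, mem_range, mem_singleton]
        constructor
        · rintro ⟨hm1, hm2⟩
          exact tri_strictMono.injective (by omega)
        · rintro rfl
          exact ⟨by have := le_tri m; omega, by omega⟩
      · rw [Finset.card_eq_zero]
        apply Finset.filter_eq_empty_iff.mpr
        intro m _
        intro hc
        exact hex ⟨m, hc.symm⟩
    rw [hcard]
    split_ifs <;> simp
  rw [hcoY, hcoPsi] at hco
  by_cases hex : ∃ r, tri r = n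
  · rw [if_pos hex] at hco ⊢
    rcases Nat.mod_two_eq_zero_or_one (numRegularPartitions 4 n) with h | h
    · exfalso
      obtain ⟨c, hc⟩ : ∃ c, numRegularPartitions 4 n = 2 * c :=
        ⟨numRegularPartitions 4 n / 2, by omega⟩
      rw [hc] at hco
      have hz : ((2*c : ℕ) : ZMod 2) = 0 := by
        push_cast
        rw [show ((2:ZMod 2)) = 0 by decide]
        ring
      rw [hz] at hco
      exact absurd hco (by decide)
    · exact h
  · rw [if_neg hex] at hco ⊢
    rcases Nat.mod_two_eq_zero_or_one (numRegularPartitions 4 n) with h | h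
    · exact h
    · exfalso
      obtain ⟨c, hc⟩ : ∃ c, numRegularPartitions 4 n = 2 * c + 1 :=
        ⟨numRegularPartitions 4 n / 2, by omega⟩
      rw [hc] at hco
      have hz : ((2*c+1 : ℕ) : ZMod 2) = 1 := by
        push_cast
        rw [show ((2:ZMod 2)) = 0 by decide]
        ring
      rw [hz] at hco
      exact absurd hco (by decide)

end Mod2

section NT

variable {p : ℕ}

lemma sq_add_sq_dvd (hp : p.Prime) (hp3 : p % 4 = 3) {u v : ℤ} (h : (p:ℤ) ∣ u^2 + v^2) :
    (p:ℤ) ∣ u ∧ (p:ℤ) ∣ v := by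
  haveI : Fact p.Prime := ⟨hp⟩
  have hnsq : ¬ IsSquare (-1 : ZMod p) := by
    rw [ZMod.exists_sq_eq_neg_one_iff]; simp [hp3]
  have hz : ((u:ZMod p))^2 + ((v:ZMod p))^2 = 0 := by
    have : ((u^2 + v^2 : ℤ) : ZMod p) = 0 := by
      rwa [ZMod.intCast_zmod_eq_zero_iff_dvd]
    push_cast at this; exact this
  by_cases hv : (v : ZMod p) = 0
  · have hu : (u : ZMod p) = 0 := by
      have h2 : ((u:ZMod p))^2 = 0 := by rw [hv] at hz; simpa using hz
      exact pow_eq_zero_iff (by norm_num) |>.mp h2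
    exact ⟨(ZMod.intCast_zmod_eq_zero_iff_dvd _ _).mp hu,
      (ZMod.intCast_zmod_eq_zero_iff_dvd _ _).mp hv⟩
  · exfalso
    apply hnsq
    refine ⟨(u:ZMod p) * (v:ZMod p)⁻¹, ?_⟩
    have hsq : ((u:ZMod p) * (v:ZMod p)⁻¹)^2 = -1 := by
      field_simp
      linear_combination hz
    rw [← sq, hsq]

/-- descent: an odd power of p (≡3 mod 4) times a unit can't be u²+v². -/
lemma no_sq_add_sq (hp : p.Prime) (hp3 : p % 4 = 3) :
    ∀ (k : ℕ) (M u v : ℤ), ¬ (p:ℤ) ∣ M → u^2 + v^2 = (p:ℤ)^(2*k+1) * M → False := by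
  intro k
  induction k with
  | zero =>
    intro M u v hM heq
    have heq1 : u^2 + v^2 = (p:ℤ) * M := by rw [heq]; ring
    have hdvd : (p:ℤ) ∣ u^2 + v^2 := by rw [heq1]; exact Dvd.intro _ rfl
    obtain ⟨⟨u', rfl⟩, ⟨v', rfl⟩⟩ := sq_add_sq_dvd hp hp3 hdvd
    apply hM
    have hp0 : (p:ℤ) ≠ 0 := by exact_mod_cast hp.ne_zero
    have h1 : (p:ℤ) * (p * (u'^2 + v'^2)) = p * M := by rw [← heq1]; ring
    have h2 : (p:ℤ) * (u'^2 + v'^2) = M := mul_left_cancel₀ hp0 h1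
    exact ⟨_, h2.symm⟩
  | succ k ih =>
    intro M u v hM heq
    have hdvd : (p:ℤ) ∣ u^2 + v^2 := by
      rw [heq]
      exact Dvd.dvd.mul_right (dvd_pow_self _ (by omega)) _
    obtain ⟨⟨u', rfl⟩, ⟨v', rfl⟩⟩ := sq_add_sq_dvd hp hp3 hdvd
    apply ih M u' v' hM
    have hp0 : (p:ℤ) ≠ 0 := by exact_mod_cast hp.ne_zero
    have hpp : (p:ℤ)^2 ≠ 0 := pow_ne_zero _ hp0
    apply mul_left_cancel₀ hpp
    have : (p:ℤ)^2 * ((p:ℤ)^(2*k+1) * M) = (p:ℤ)^(2*(k+1)+1) * M := by ring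
    rw [this, ← heq]; ring

end NT

/-- `t` is not a sum of two triangular numbers. -/
lemma no_two_tri {p : ℕ} (hp : p.Prime) (hp3 : p % 4 = 3) (k : ℕ) (t : ℕ) (m : ℤ)
    (hm : ¬ (p:ℤ) ∣ m) (ht : (4 * t + 1 : ℤ) = (p:ℤ)^(2*k+1) * m) :
    ¬ ∃ a b : ℕ, tri a + tri b = t := by
  rintro ⟨a, b, hab⟩
  have hpodd : ¬ (p:ℤ) ∣ 2 := by
    intro h
    have h2 : p ∣ 2 := by exact_mod_cast h
    have := (Nat.prime_dvd_prime_iff_eq hp Nat.prime_two).mp h2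
    omega
  apply no_sq_add_sq hp hp3 k (2 * m) (2*a+1) (2*b+1)
  · intro h
    rcases (Int.Prime.dvd_mul' (by exact_mod_cast hp) h) with h2 | h2
    · exact hpodd h2
    · exact hm h2
  · have h8a := two_tri a
    have h8b := two_tri b
    have : ((2*a+1:ℕ):ℤ)^2 + ((2*b+1:ℕ):ℤ)^2 = 8 * t + 2 := by
      push_cast
      have : (a:ℤ) * (a+1) = 2 * tri a := by exact_mod_cast (two_tri a).symm
      have hb : (b:ℤ) * (b+1) = 2 * tri b := by exact_mod_cast (two_tri b).symm
      have htab : (tri a : ℤ) + tri b = t := by exact_mod_cast hab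
      nlinarith [this, hb]
    push_cast at this ⊢
    rw [this]
    linarith [ht]

lemma no_two_tri' (t : ℕ) (hno : ¬ ∃ a b : ℕ, tri a + tri b = t) :
    B 4 t % 4 = 0 := by
  have h4 : ((B 4 t : ℕ) : ZMod 4) = 0 → B 4 t % 4 = 0 := by
    intro h
    have := (ZMod.natCast_eq_zero_iff _ 4).mp h
    omega
  apply h4
  rw [B, Nat.cast_sum]
  -- even-ness facts
  have heven : ∀ a b : ℕ, a + b = t → 2 ∣ numRegularPartitions 4 a * numRegularPartitions 4 b := by
    intro a b hab
    by_contra hodd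
    have ha : numRegularPartitions 4 a % 2 = 1 := by
      rcases Nat.mod_two_eq_zero_or_one (numRegularPartitions 4 a) with h | h
      · exact absurd (Dvd.dvd.mul_right (Nat.dvd_of_mod_eq_zero h) _) hodd
      · exact h
    have hb : numRegularPartitions 4 b % 2 = 1 := by
      rcases Nat.mod_two_eq_zero_or_one (numRegularPartitions 4 b) with h | h
      · exact absurd (Dvd.dvd.mul_left (Nat.dvd_of_mod_eq_zero h) _) hodd
      · exact h
    rw [key_parity] at ha hb
    have h1 : ∃ r, tri r = a := by by_contra h; simp [h] at ha
    have h2 : ∃ r, tri r = b := by by_contra h; simp [h] at hb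
    obtain ⟨r, hr⟩ := h1; obtain ⟨s, hs⟩ := h2
    exact hno ⟨r, s, by omega⟩
  apply Finset.sum_involution (fun ab _ => (ab.2, ab.1))
  · intro ab hab
    rw [HasAntidiagonal.mem_antidiagonal] at hab
    have h2 : 2 ∣ numRegularPartitions 4 ab.1 * numRegularPartitions 4 ab.2 :=
      heven _ _ hab
    obtain ⟨c, hc⟩ := h2
    have : (numRegularPartitions 4 ab.1 * numRegularPartitions 4 ab.2 : ℕ)
        + (numRegularPartitions 4 ab.2 * numRegularPartitions 4 ab.1 : ℕ) = 4 * c := by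
      rw [mul_comm (numRegularPartitions 4 ab.2)]; omega
    push_cast
    rw [← Nat.cast_mul, ← Nat.cast_mul, ← Nat.cast_add, this]
    push_cast
    rw [show ((4:ZMod 4)) = 0 by decide]
    ring
  · intro ab hab hne
    rw [HasAntidiagonal.mem_antidiagonal] at hab
    intro heq
    apply hne
    have hab1 : ab.1 = ab.2 := by
      have := congrArg Prod.fst heq
      simp at this; omega
    obtain ⟨c, hc⟩ := heven ab.1 ab.2 hab
    -- both factors equal, product even means factor even, square div by 4
    have : 2 ∣ numRegularPartitions 4 ab.1 := by
      rcases Nat.Prime.dvd_mul Nat.prime_two |>.mp ⟨c, hc⟩ with h | h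
      · exact h
      · rw [hab1]; exact h
    obtain ⟨d, hd⟩ := this
    rw [← hab1, hd]
    have : 2 * d * (2 * d) = 4 * (d * d) := by ring
    rw [this]
    push_cast
    rw [show ((4:ZMod 4)) = 0 by decide]
    ring
  · intro ab hab
    rw [HasAntidiagonal.mem_antidiagonal] at hab ⊢
    omega
  · intro ab _
    rfl

/-- Let `p` be a prime congruent to `3 (mod 4)` and `j` an integer not divisible by `p`.
If `t` is the natural number with
`4 t = 4 p^(2k+2) n + 4 p^(2k+1) j + (p^(2k+2) - 1)`, i.e.
`t = p^(2k+2) n + p^(2k+1) j + (p^(2k+2) - 1)/4`, then `B 4 t = 0 (mod 4)`. -/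
theorem stmt10 (k n : ℕ) (hn : 0 < n) (p : ℕ) (hp : p.Prime) (hp3 : p % 4 = 3)
    (j : ℤ) (hj : ¬ ((p : ℤ) ∣ j)) :
    ∀ t : ℕ,
      (4 * t : ℤ) =
        4 * (p : ℤ) ^ (2 * k + 2) * n + 4 * (p : ℤ) ^ (2 * k + 1) * j +
          ((p : ℤ) ^ (2 * k + 2) - 1) →
      B 4 t % 4 = 0 := by
  intro t ht
  have hm : ¬ (p:ℤ) ∣ (4*(p:ℤ)*(n:ℤ) + 4*j + (p:ℤ)) := by
    intro h
    have h4j : (p:ℤ) ∣ 4*j := by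
      have heq : (4*(p:ℤ)*(n:ℤ) + 4*j + (p:ℤ)) - ((p:ℤ)*(4*(n:ℤ)) + (p:ℤ)*1) = 4*j := by ring
      rw [← heq]
      exact dvd_sub h (by exact Dvd.dvd.mul_right (dvd_refl _) _ |>.add (Dvd.intro 1 rfl))
    rcases Int.Prime.dvd_mul' (by exact_mod_cast hp) h4j with h2 | h2
    · have h3 : p ∣ 4 := by exact_mod_cast h2
      have := Nat.le_of_dvd (by norm_num) h3
      interval_cases p <;> omega
    · exact hj h2
  have ht1 : (4*(t:ℤ)+1 : ℤ) = (p:ℤ)^(2*k+1) * (4*(p:ℤ)*(n:ℤ) + 4*j + (p:ℤ)) := by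
    linear_combination ht
  exact no_two_tri' t (no_two_tri hp hp3 k t _ hm ht1)
end
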